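/- Let F₁, F₂, F₃ be real-valued dyadic step functions on [0,1)² and let the functions of tiles B₁,…,B₅ and of multitiles A be as defined below, with B_− := B₁ − B₂ − (1/2)B₃ − (1/2)B₄ − (1/2)B₅ and B_+ := B₁ + B₂ + (1/2)B₃ + (1/2)B₄ + (1/2)B₅. Then for every multitile P = I×J×Ω: (□B_−)(P) ≤ A(P) ≤ (□B_+)(P). -/

import Mathlib

open MeasureTheory

/-- The `j`-th binary digit of a nonnegative real number `x`. -/
noncomputable def bdigit (x : ℝ) (j : ℤ) : ℕ := (Int.toNat ⌊x / 2 ^ j⌋) % 2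

/-- Binary digitwise addition (XOR) of nonnegative reals. -/
noncomputable def dxor (x y : ℝ) : ℝ :=
  ∑' j : ℤ, (((bdigit x j + bdigit y j) % 2 : ℕ) : ℝ) * 2 ^ j

/-- The dyadic interval `[2^{-k} l, 2^{-k} (l+1))`. -/
def dyadicI (k : ℤ) (l : ℕ) : Set ℝ :=
  Set.Ico ((2 : ℝ) ^ (-k) * l) ((2 : ℝ) ^ (-k) * (l + 1))

/-- The L^∞-normalized Walsh wave packet `w_{I,n}` for `I = [2^{-k} l, 2^{-k}(l+1))`. -/
noncomputable def walsh (k : ℤ) (l n : ℕ) (x : ℝ) : ℝ :=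
  Set.indicator (dyadicI k l)
    (fun x => (-1 : ℝ) ^ (∑ j ∈ Finset.range (n + 1),
      (Nat.testBit n j).toNat * bdigit x (-(j : ℤ) - k - 1))) x

/-- The Walsh–Fourier average `[f]_{I,n} = |I|^{-1} ∫_I f w_{I,n}`. -/
noncomputable def avg (k : ℤ) (l n : ℕ) (f : ℝ → ℝ) : ℝ :=
  (2 : ℝ) ^ k * ∫ x in dyadicI k l, f x * walsh k l n x

/-- A real-valued dyadic step function supported on `[0,1)²`. -/
def IsDyadicStep (F : ℝ → ℝ → ℝ) : Prop :=
  ∃ (s : Finset ((ℤ × ℕ) × (ℤ × ℕ))) (c : (ℤ × ℕ) × (ℤ × ℕ) → ℝ),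
    (∀ p ∈ s, dyadicI p.1.1 p.1.2 ⊆ Set.Ico (0 : ℝ) 1 ∧
      dyadicI p.2.1 p.2.2 ⊆ Set.Ico (0 : ℝ) 1) ∧
    ∀ x y : ℝ, F x y = ∑ p ∈ s, c p * Set.indicator (dyadicI p.1.1 p.1.2) 1 x *
      Set.indicator (dyadicI p.2.1 p.2.2) 1 y

/-- `F` is constant on dyadic squares with sides of length `2^{-M}`. -/
def ConstOnSquares (M : ℕ) (F : ℝ → ℝ → ℝ) : Prop :=
  ∀ l₁ l₂ : ℕ, ∀ x ∈ dyadicI (M : ℤ) l₁, ∀ x' ∈ dyadicI (M : ℤ) l₁,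
    ∀ y ∈ dyadicI (M : ℤ) l₂, ∀ y' ∈ dyadicI (M : ℤ) l₂, F x y = F x' y'

/-- `B₁` at the tile `(k, l₁, l₂, n)`: tile `I×J×Ω` with `I = [2^{-k}l₁,·)`, `J = [2^{-k}l₂,·)`,
`Ω = [2^k n, 2^k(n+1))`. -/
noncomputable def B1 (F₁ F₂ F₃ : ℝ → ℝ → ℝ) (k : ℤ) (l₁ l₂ n : ℕ) : ℝ :=
  avg k l₂ n (fun y => avg k l₁ 0 (fun x => F₁ x y)) *
    avg k l₂ n (fun y => avg k l₁ n (fun x => F₂ x y) * avg k l₁ n (fun x => F₃ x y))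

noncomputable def B2 (F₁ : ℝ → ℝ → ℝ) (k : ℤ) (l₁ l₂ n : ℕ) : ℝ :=
  (avg k l₂ n (fun y => avg k l₁ 0 (fun x => F₁ x y))) ^ 2

noncomputable def B3 (F₂ F₃ : ℝ → ℝ → ℝ) (k : ℤ) (l₁ l₂ n : ℕ) : ℝ :=
  (avg k l₂ n (fun y => avg k l₁ n (fun x => F₂ x y) * avg k l₁ n (fun x => F₃ x y))) ^ 2

noncomputable def B4 (F₂ : ℝ → ℝ → ℝ) (k : ℤ) (l₁ l₂ n : ℕ) : ℝ :=
  (avg k l₂ 0 (fun y => (avg k l₁ n (fun x => F₂ x y)) ^ 2)) ^ 2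

noncomputable def B5 (F₃ : ℝ → ℝ → ℝ) (k : ℤ) (l₁ l₂ n : ℕ) : ℝ :=
  (avg k l₂ 0 (fun y => (avg k l₁ n (fun x => F₃ x y)) ^ 2)) ^ 2

noncomputable def Bminus (F₁ F₂ F₃ : ℝ → ℝ → ℝ) (k : ℤ) (l₁ l₂ n : ℕ) : ℝ :=
  B1 F₁ F₂ F₃ k l₁ l₂ n - B2 F₁ k l₁ l₂ n - (1/2) * B3 F₂ F₃ k l₁ l₂ n
    - (1/2) * B4 F₂ k l₁ l₂ n - (1/2) * B5 F₃ k l₁ l₂ n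

noncomputable def Bplus (F₁ F₂ F₃ : ℝ → ℝ → ℝ) (k : ℤ) (l₁ l₂ n : ℕ) : ℝ :=
  B1 F₁ F₂ F₃ k l₁ l₂ n + B2 F₁ k l₁ l₂ n + (1/2) * B3 F₂ F₃ k l₁ l₂ n
    + (1/2) * B4 F₂ k l₁ l₂ n + (1/2) * B5 F₃ k l₁ l₂ n

/-- The first-order difference `□B` at the multitile `(k, l₁, l₂, n)`, whose frequency
interval is `Ω = [2^{k+1} n, 2^{k+1}(n+1))`. -/
noncomputable def boxB (B : ℤ → ℕ → ℕ → ℕ → ℝ) (k : ℤ) (l₁ l₂ n : ℕ) : ℝ :=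
  (1/4) * (∑ α ∈ Finset.range 2, ∑ β ∈ Finset.range 2, B (k + 1) (2 * l₁ + α) (2 * l₂ + β) n)
    - ∑ γ ∈ Finset.range 2, B k l₁ l₂ (2 * n + γ)

/-- `A` at the multitile `(k, l₁, l₂, n)`. -/
noncomputable def Aform (F₁ F₂ F₃ : ℝ → ℝ → ℝ) (k : ℤ) (l₁ l₂ n : ℕ) : ℝ :=
  ∑ γ ∈ Finset.range 2,
    avg k l₂ (2 * n + γ) (fun y => avg k l₁ 0 (fun x => F₁ x y)) *
      avg k l₂ (2 * n + γ) (fun y =>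
        avg k l₁ (2 * n + (1 - γ)) (fun x => F₂ x y) *
        avg k l₁ (2 * n + (1 - γ)) (fun x => F₃ x y))

/-! ### Infrastructure -/

/-- Bounded measurable real functions. -/
def BM (f : ℝ → ℝ) : Prop := Measurable f ∧ ∃ C : ℝ, ∀ x, |f x| ≤ C

lemma BM.add {f g : ℝ → ℝ} (hf : BM f) (hg : BM g) : BM (fun x => f x + g x) := by
  obtain ⟨hfm, C, hC⟩ := hf; obtain ⟨hgm, D, hD⟩ := hg
  exact ⟨hfm.add hgm, C + D, fun x => (abs_add_le _ _).trans (add_le_add (hC x) (hD x))⟩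

lemma BM.mul {f g : ℝ → ℝ} (hf : BM f) (hg : BM g) : BM (fun x => f x * g x) := by
  obtain ⟨hfm, C, hC⟩ := hf; obtain ⟨hgm, D, hD⟩ := hg
  refine ⟨hfm.mul hgm, C * D, fun x => ?_⟩
  rw [abs_mul]
  exact mul_le_mul (hC x) (hD x) (abs_nonneg _) ((abs_nonneg _).trans (hC x))

lemma BM.sub {f g : ℝ → ℝ} (hf : BM f) (hg : BM g) : BM (fun x => f x - g x) := by
  obtain ⟨hfm, C, hC⟩ := hf; obtain ⟨hgm, D, hD⟩ := hg
  exact ⟨hfm.sub hgm, C + D, fun x => (abs_sub _ _).trans (add_le_add (hC x) (hD x))⟩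

lemma BM.const_mul {f : ℝ → ℝ} (hf : BM f) (c : ℝ) : BM (fun x => c * f x) :=
  BM.mul ⟨measurable_const, |c|, fun _ => le_refl _⟩ hf

lemma bm_measurable_bdigit (j : ℤ) : Measurable fun x : ℝ => bdigit x j := by
  unfold bdigit
  have h1 : Measurable fun x : ℝ => x / 2 ^ j :=
    (measurable_id : Measurable fun x : ℝ => x).div_const _
  have h2 : Measurable fun x : ℝ => ⌊x / 2 ^ j⌋ := Int.measurable_floor.comp h1
  exact (measurable_from_top : Measurable fun z : ℤ => Int.toNat z % 2).comp h2

lemma bm_walsh (k : ℤ) (l n : ℕ) : BM (walsh k l n) := by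
  constructor
  · unfold walsh
    apply Measurable.indicator ?_ measurableSet_Ico
    have hE : Measurable fun x : ℝ => (∑ j ∈ Finset.range (n + 1),
        (Nat.testBit n j).toNat * bdigit x (-(j : ℤ) - k - 1)) := by
      apply Finset.measurable_sum
      intro j _
      exact (bm_measurable_bdigit _).const_mul _
    exact (measurable_from_top : Measurable fun e : ℕ => (-1 : ℝ) ^ e).comp hE
  · refine ⟨1, fun x => ?_⟩
    unfold walsh
    by_cases hx : x ∈ dyadicI k l
    · rw [Set.indicator_of_mem hx, abs_pow, abs_neg, abs_one, one_pow]
    · rw [Set.indicator_of_notMem hx]; norm_num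

lemma abs_walsh_le (k : ℤ) (l n : ℕ) (x : ℝ) : |walsh k l n x| ≤ 1 := by
  unfold walsh
  by_cases hx : x ∈ dyadicI k l
  · rw [Set.indicator_of_mem hx, abs_pow, abs_neg, abs_one, one_pow]
  · rw [Set.indicator_of_notMem hx]; norm_num

lemma walsh_zero_apply (k : ℤ) (l : ℕ) (x : ℝ) :
    walsh k l 0 x = Set.indicator (dyadicI k l) (fun _ => (1:ℝ)) x := by
  unfold walsh
  by_cases hx : x ∈ dyadicI k l
  · rw [Set.indicator_of_mem hx, Set.indicator_of_mem hx]
    simp [Nat.zero_testBit]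
  · rw [Set.indicator_of_notMem hx, Set.indicator_of_notMem hx]

lemma walsh_zero_nonneg (k : ℤ) (l : ℕ) (x : ℝ) : 0 ≤ walsh k l 0 x := by
  rw [walsh_zero_apply]
  exact Set.indicator_nonneg (fun _ _ => zero_le_one) x

lemma walsh_zero_le_one (k : ℤ) (l : ℕ) (x : ℝ) : walsh k l 0 x ≤ 1 :=
  (le_abs_self _).trans (abs_walsh_le k l 0 x)

lemma BM.integrableOn_Ico {f : ℝ → ℝ} (hf : BM f) (a b : ℝ) :
    MeasureTheory.IntegrableOn f (Set.Ico a b) := by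
  obtain ⟨hm, C, hC⟩ := hf
  haveI : MeasureTheory.IsFiniteMeasure (MeasureTheory.volume.restrict (Set.Ico a b)) := by
    constructor
    rw [MeasureTheory.Measure.restrict_apply_univ]
    exact measure_Ico_lt_top
  refine ⟨hm.aestronglyMeasurable.restrict, ?_⟩
  exact MeasureTheory.HasFiniteIntegral.of_bounded
    (Filter.Eventually.of_forall (fun x => by simpa [Real.norm_eq_abs] using hC x))

lemma BM.integrableOn_dyadicI {f : ℝ → ℝ} (hf : BM f) (k : ℤ) (l : ℕ) :
    MeasureTheory.IntegrableOn f (dyadicI k l) := hf.integrableOn_Ico _ _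

lemma integrableOn_mul_walsh {f : ℝ → ℝ} (hf : BM f) (k k' : ℤ) (l l' n : ℕ) :
    MeasureTheory.IntegrableOn (fun x => f x * walsh k' l' n x) (dyadicI k l) :=
  (hf.mul (bm_walsh k' l' n)).integrableOn_dyadicI k l

/-! ### avg lemmas -/

lemma avg_congr (k : ℤ) (l m : ℕ) {f g : ℝ → ℝ} (h : ∀ x, f x = g x) :
    avg k l m f = avg k l m g := by
  have : f = g := funext h
  rw [this]

lemma avg_lin2 (k : ℤ) (l m : ℕ) (c₁ c₂ : ℝ) (f g : ℝ → ℝ) (hf : BM f) (hg : BM g) :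
    avg k l m (fun x => c₁ * f x + c₂ * g x) = c₁ * avg k l m f + c₂ * avg k l m g := by
  unfold avg
  rw [show (fun x => (c₁ * f x + c₂ * g x) * walsh k l m x)
      = (fun x => c₁ * (f x * walsh k l m x) + c₂ * (g x * walsh k l m x)) from
      funext fun x => by ring]
  rw [MeasureTheory.integral_add ((integrableOn_mul_walsh hf k k l l m).const_mul c₁)
      ((integrableOn_mul_walsh hg k k l l m).const_mul c₂),
    integral_const_mul, integral_const_mul]
  ring

lemma avg_lin3 (k : ℤ) (l m : ℕ) (c₁ c₂ c₃ : ℝ) (f g h : ℝ → ℝ)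
    (hf : BM f) (hg : BM g) (hh : BM h) :
    avg k l m (fun x => c₁ * f x + c₂ * g x + c₃ * h x)
      = c₁ * avg k l m f + c₂ * avg k l m g + c₃ * avg k l m h := by
  have h2 : BM (fun x => c₂ * g x + c₃ * h x) := (hg.const_mul c₂).add (hh.const_mul c₃)
  have e1 : avg k l m (fun x => c₁ * f x + c₂ * g x + c₃ * h x)
      = c₁ * avg k l m f + 1 * avg k l m (fun x => c₂ * g x + c₃ * h x) := by
    rw [← avg_lin2 k l m c₁ 1 f _ hf h2]
    exact avg_congr k l m (fun x => by ring)
  rw [e1, avg_lin2 k l m c₂ c₃ g h hg hh]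
  ring

lemma avg_zero_nonneg (k : ℤ) (l : ℕ) {f : ℝ → ℝ} (h : ∀ x, 0 ≤ f x) :
    0 ≤ avg k l 0 f := by
  unfold avg
  apply mul_nonneg (le_of_lt (zpow_pos (by norm_num) k))
  exact MeasureTheory.setIntegral_nonneg measurableSet_Ico
    (fun x _ => mul_nonneg (h x) (walsh_zero_nonneg k l x))
/-! ### Dyadic splitting -/

lemma dyadicI_union (k : ℤ) (l : ℕ) :
    dyadicI (k+1) (2*l) ∪ dyadicI (k+1) (2*l+1) = dyadicI k l := by
  unfold dyadicI
  have h2 : (2:ℝ) ^ (-k) = 2 ^ (-(k+1)) * 2 := by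
    rw [← zpow_add_one₀ (by norm_num : (2:ℝ) ≠ 0)]
    norm_num
  have e1 : (2:ℝ) ^ (-(k+1)) * ((2*l : ℕ) : ℝ) = 2 ^ (-k) * (l : ℕ) := by
    rw [h2]; push_cast; ring
  have e2 : (2:ℝ) ^ (-(k+1)) * (((2*l+1 : ℕ) : ℝ) + 1) = 2 ^ (-k) * ((l : ℝ) + 1) := by
    rw [h2]; push_cast; ring
  have e3 : (2:ℝ) ^ (-(k+1)) * (((2*l : ℕ) : ℝ) + 1) = 2 ^ (-(k+1)) * ((2*l+1 : ℕ) : ℝ) := by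
    push_cast; ring
  rw [e3]
  rw [Set.Ico_union_Ico_eq_Ico]
  · rw [e1, e2]
  · apply mul_le_mul_of_nonneg_left _ (le_of_lt (zpow_pos (by norm_num) _))
    push_cast; linarith
  · apply mul_le_mul_of_nonneg_left _ (le_of_lt (zpow_pos (by norm_num) _))
    push_cast; linarith

lemma dyadicI_disjoint (k : ℤ) (l : ℕ) :
    Disjoint (dyadicI (k+1) (2*l)) (dyadicI (k+1) (2*l+1)) := by
  rw [Set.disjoint_left]
  intro x hx hx'
  have h1 : x < (2:ℝ) ^ (-(k+1)) * ((2*l : ℕ) + 1 : ℝ) := by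
    have := hx.2; push_cast at this ⊢; linarith
  have h2 : (2:ℝ) ^ (-(k+1)) * ((2*l+1 : ℕ) : ℝ) ≤ x := hx'.1
  push_cast at h1 h2
  linarith

lemma mem_dyadicI_parent {k : ℤ} {l α : ℕ} (hα : α < 2) {x : ℝ}
    (hx : x ∈ dyadicI (k+1) (2*l+α)) : x ∈ dyadicI k l := by
  rw [← dyadicI_union k l]
  interval_cases α
  · exact Set.mem_union_left _ hx
  · exact Set.mem_union_right _ hx

/-- The digit of `x` at scale `k+1` inside a child interval. -/
lemma bdigit_child {k : ℤ} {l α : ℕ} (hα : α < 2) {x : ℝ}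
    (hx : x ∈ dyadicI (k+1) (2*l+α)) : bdigit x (-k-1) = α := by
  have hpos : (0:ℝ) < 2 ^ (-k-1) := zpow_pos (by norm_num) _
  have hfloor : ⌊x / 2 ^ (-k-1 : ℤ)⌋ = (2*l+α : ℕ) := by
    rw [Int.floor_eq_iff]
    obtain ⟨hx1, hx2⟩ := hx
    have hk : (-(k+1) : ℤ) = -k-1 := by ring
    rw [hk] at hx1 hx2
    constructor
    · rw [Int.cast_natCast, le_div_iff₀ hpos]
      calc ((2*l+α : ℕ) : ℝ) * 2 ^ (-k-1 : ℤ) = 2 ^ (-k-1 : ℤ) * ((2*l+α : ℕ) : ℝ) := by ring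
        _ ≤ x := hx1
    · rw [div_lt_iff₀ hpos]
      calc x < 2 ^ (-k-1 : ℤ) * (((2*l+α : ℕ) : ℝ) + 1) := hx2
        _ = (((2*l+α : ℕ) : ℤ) + 1 : ℝ) * 2 ^ (-k-1 : ℤ) := by push_cast; ring
  unfold bdigit
  rw [hfloor]
  simp only [Int.toNat_natCast]
  omega
/-! ### Walsh recursion -/

lemma walsh_exponent_sum (n : ℕ) (c : ℕ → ℕ) (M : ℕ) (hM : n = 0 ∨ n + 1 ≤ M) :
    ∑ j ∈ Finset.range M, (Nat.testBit n j).toNat * c j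
      = ∑ j ∈ Finset.range (n+1), (Nat.testBit n j).toNat * c j := by
  rcases hM with h0 | hM
  · subst h0
    simp [Nat.zero_testBit]
  · symm
    apply Finset.sum_subset (Finset.range_subset_range.mpr hM)
    intro j hj hj'
    have hj2 : n + 1 ≤ j := by
      simp only [Finset.mem_range, not_lt] at hj'
      exact hj'
    have : Nat.testBit n j = false := by
      apply Nat.testBit_eq_false_of_lt
      calc n < 2 ^ n := Nat.lt_two_pow_self
        _ ≤ 2 ^ j := Nat.pow_le_pow_right (by norm_num) (by omega)
    rw [this]
    simp

lemma walsh_child {k : ℤ} {l n γ α : ℕ} (hγ : γ < 2) (hα : α < 2) {x : ℝ}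
    (hx : x ∈ dyadicI (k+1) (2*l+α)) :
    walsh k l (2*n+γ) x = (-1 : ℝ) ^ (γ * α) * walsh (k+1) (2*l+α) n x := by
  have hxp : x ∈ dyadicI k l := mem_dyadicI_parent hα hx
  unfold walsh
  rw [Set.indicator_of_mem hxp, Set.indicator_of_mem hx, ← pow_add]
  congr 1
  -- exponent identity over ℕ
  have hsplit : ∑ j ∈ Finset.range (2*n+γ+1), (Nat.testBit (2*n+γ) j).toNat * bdigit x (-(j:ℤ) - k - 1)
      = (∑ i ∈ Finset.range (2*n+γ), (Nat.testBit (2*n+γ) (i+1)).toNat * bdigit x (-((i:ℤ)+1) - k - 1))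
        + (Nat.testBit (2*n+γ) 0).toNat * bdigit x (-(0:ℤ) - k - 1) := by
    rw [Finset.sum_range_succ']
    push_cast
    ring_nf
    rw [add_comm]; congr 1; refine Finset.sum_congr rfl (fun i _ => ?_); congr 2; ring
  rw [hsplit]
  have hbit0 : (Nat.testBit (2*n+γ) 0).toNat = γ := by
    rw [Nat.testBit_zero]
    interval_cases γ <;> simp <;> omega
  have hdig0 : bdigit x (-(0:ℤ) - k - 1) = α := by
    have : (-(0:ℤ) - k - 1) = -k-1 := by ring
    rw [this]
    exact bdigit_child hα hx
  have hterm : ∀ i, (Nat.testBit (2*n+γ) (i+1)).toNat * bdigit x (-((i:ℤ)+1) - k - 1)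
      = (Nat.testBit n i).toNat * bdigit x (-(i:ℤ) - (k+1) - 1) := by
    intro i
    have h1 : Nat.testBit (2*n+γ) (i+1) = Nat.testBit n i := by
      rw [Nat.testBit_succ]
      congr 1
      omega
    have h2 : (-((i:ℤ)+1) - k - 1) = (-(i:ℤ) - (k+1) - 1) := by ring
    rw [h1, h2]
  calc (∑ i ∈ Finset.range (2*n+γ), (Nat.testBit (2*n+γ) (i+1)).toNat * bdigit x (-((i:ℤ)+1) - k - 1))
        + (Nat.testBit (2*n+γ) 0).toNat * bdigit x (-(0:ℤ) - k - 1)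
      = (∑ i ∈ Finset.range (2*n+γ), (Nat.testBit n i).toNat * bdigit x (-(i:ℤ) - (k+1) - 1)) + γ * α := by
        rw [hbit0, hdig0]
        congr 1
        exact Finset.sum_congr rfl (fun i _ => hterm i)
    _ = γ * α + ∑ j ∈ Finset.range (n+1), (Nat.testBit n j).toNat * bdigit x (-(j:ℤ) - (k+1) - 1) := by
        rw [walsh_exponent_sum n _ (2*n+γ) (by omega)]
        ring
/-! ### avg splitting -/

lemma avg_split {k : ℤ} {l n γ : ℕ} (hγ : γ < 2) (f : ℝ → ℝ) (hf : BM f) :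
    avg k l (2*n+γ) f
      = 1/2 * avg (k+1) (2*l) n f + 1/2 * (-1:ℝ)^γ * avg (k+1) (2*l+1) n f := by
  unfold avg
  have hsplit : ∫ x in dyadicI k l, f x * walsh k l (2*n+γ) x
      = (∫ x in dyadicI (k+1) (2*l), f x * walsh k l (2*n+γ) x)
        + ∫ x in dyadicI (k+1) (2*l+1), f x * walsh k l (2*n+γ) x := by
    rw [← dyadicI_union k l]
    exact setIntegral_union (dyadicI_disjoint k l) measurableSet_Ico
      (integrableOn_mul_walsh hf _ _ _ _ _) (integrableOn_mul_walsh hf _ _ _ _ _)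
  have hchild : ∀ α : ℕ, α < 2 →
      ∫ x in dyadicI (k+1) (2*l+α), f x * walsh k l (2*n+γ) x
        = (-1:ℝ)^(γ*α) * ∫ x in dyadicI (k+1) (2*l+α), f x * walsh (k+1) (2*l+α) n x := by
    intro α hα
    rw [← integral_const_mul]
    apply setIntegral_congr_fun measurableSet_Ico
    intro x hx
    dsimp only
    rw [walsh_child hγ hα hx]
    ring
  have h0 := hchild 0 (by norm_num)
  have h1 := hchild 1 (by norm_num)
  rw [hsplit]
  rw [show (2*l+0 : ℕ) = 2*l from rfl] at h0
  rw [h0, h1]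
  have hpow : (2:ℝ) ^ k = 1/2 * 2 ^ (k+1) := by
    rw [zpow_add_one₀ (by norm_num : (2:ℝ) ≠ 0)]
    ring
  rw [hpow]
  have : (-1:ℝ)^(γ*0) = 1 := by norm_num
  rw [this]
  have : (-1:ℝ)^(γ*1) = (-1:ℝ)^γ := by norm_num
  rw [this]
  ring

lemma avg_split0 {k : ℤ} {l : ℕ} (n : ℕ) (f : ℝ → ℝ) (hf : BM f) :
    avg k l (2*n) f = 1/2 * avg (k+1) (2*l) n f + 1/2 * avg (k+1) (2*l+1) n f := by
  have h := avg_split (k := k) (l := l) (n := n) (γ := 0) (by norm_num) f hf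
  simpa using h

lemma avg_split1 {k : ℤ} {l : ℕ} (n : ℕ) (f : ℝ → ℝ) (hf : BM f) :
    avg k l (2*n+1) f = 1/2 * avg (k+1) (2*l) n f - 1/2 * avg (k+1) (2*l+1) n f := by
  have h := avg_split (k := k) (l := l) (n := n) (γ := 1) (by norm_num) f hf
  rw [h]
  ring

lemma avg_split00 {k : ℤ} {l : ℕ} (f : ℝ → ℝ) (hf : BM f) :
    avg k l 0 f = 1/2 * avg (k+1) (2*l) 0 f + 1/2 * avg (k+1) (2*l+1) 0 f := by
  have h := avg_split0 (k := k) (l := l) 0 f hf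
  simpa using h
/-! ### Cauchy–Schwarz for avg -/

lemma BM.abs {f : ℝ → ℝ} (hf : BM f) : BM (fun x => |f x|) := by
  obtain ⟨hm, C, hC⟩ := hf
  exact ⟨hm.abs, C, fun x => by rw [abs_abs]; exact hC x⟩

lemma BM.sq {f : ℝ → ℝ} (hf : BM f) : BM (fun x => f x ^ 2) := by
  have h := hf.mul hf
  obtain ⟨hm, C, hC⟩ := h
  exact ⟨by simpa [pow_two] using hm, C, fun x => by simpa [pow_two] using hC x⟩

lemma avg_cs (k : ℤ) (l n : ℕ) (φ ψ : ℝ → ℝ) (hφ : BM φ) (hψ : BM ψ) :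
    (avg k l n (fun x => φ x * ψ x))^2
      ≤ avg k l 0 (fun x => φ x ^ 2) * avg k l 0 (fun x => ψ x ^ 2) := by
  set a := ∫ x in dyadicI k l, φ x ^ 2 with hadef
  set c := ∫ x in dyadicI k l, ψ x ^ 2 with hcdef
  set b := ∫ x in dyadicI k l, |φ x| * |ψ x| with hbdef
  have ha : 0 ≤ a := setIntegral_nonneg measurableSet_Ico (fun x _ => sq_nonneg _)
  have hc : 0 ≤ c := setIntegral_nonneg measurableSet_Ico (fun x _ => sq_nonneg _)
  have hb : 0 ≤ b := setIntegral_nonneg measurableSet_Ico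
    (fun x _ => mul_nonneg (abs_nonneg _) (abs_nonneg _))
  have hint_ab : IntegrableOn (fun x => |φ x| * |ψ x|) (dyadicI k l) :=
    (hφ.abs.mul hψ.abs).integrableOn_Ico _ _
  have hint_sq : IntegrableOn (fun x => φ x ^ 2) (dyadicI k l) := hφ.sq.integrableOn_Ico _ _
  have hint_sq' : IntegrableOn (fun x => ψ x ^ 2) (dyadicI k l) := hψ.sq.integrableOn_Ico _ _
  -- step 1 : |∫ φψ w| ≤ b
  have h1 : |∫ x in dyadicI k l, φ x * ψ x * walsh k l n x| ≤ b := by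
    have h1a : |∫ x in dyadicI k l, φ x * ψ x * walsh k l n x|
        ≤ ∫ x in dyadicI k l, |φ x| * |ψ x| * |walsh k l n x| := by
      simpa [Real.norm_eq_abs, abs_mul] using
        norm_integral_le_integral_norm (μ := volume.restrict (dyadicI k l))
          (f := fun x => φ x * ψ x * walsh k l n x)
    refine h1a.trans ?_
    apply integral_mono ?_ hint_ab ?_
    · have : BM (fun x => |φ x| * |ψ x| * |walsh k l n x|) :=
        (hφ.abs.mul hψ.abs).mul (bm_walsh k l n).abs
      exact this.integrableOn_Ico _ _
    · intro x
      dsimp only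
      exact mul_le_of_le_one_right (mul_nonneg (abs_nonneg _) (abs_nonneg _))
        (abs_walsh_le k l n x)
  -- step 2 : quadratic positivity
  have hquad : ∀ t : ℝ, 0 ≤ a * t^2 + 2 * b * t + c := by
    intro t
    have h0 : 0 ≤ ∫ x in dyadicI k l, (t * |φ x| + |ψ x|)^2 :=
      setIntegral_nonneg measurableSet_Ico (fun x _ => sq_nonneg _)
    have i2 : IntegrableOn (fun x => 2 * t * (|φ x| * |ψ x|) + ψ x ^ 2) (dyadicI k l) :=
      (hint_ab.const_mul _).add hint_sq'
    have hexp : ∫ x in dyadicI k l, (t * |φ x| + |ψ x|)^2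
        = t^2 * a + 2 * t * b + c := by
      have e : (fun x => (t * |φ x| + |ψ x|)^2)
          = fun x => t^2 * (φ x ^ 2) + (2 * t * (|φ x| * |ψ x|) + ψ x ^ 2) := by
        funext x
        have h1' : |φ x| ^ 2 = φ x ^ 2 := sq_abs _
        have h2' : |ψ x| ^ 2 = ψ x ^ 2 := sq_abs _
        nlinarith [h1', h2']
      rw [e]
      rw [integral_add (hint_sq.const_mul _) i2,
        integral_add (hint_ab.const_mul _) hint_sq',
        integral_const_mul, integral_const_mul, ← hadef, ← hbdef, ← hcdef]
      ring
    nlinarith [h0, hexp]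
  -- step 3 : b^2 ≤ a*c
  have hb2 : b^2 ≤ a * c := by
    rcases eq_or_lt_of_le ha with haz | hap
    · have hbz : b = 0 := by
        by_contra hbne
        have hbp : 0 < b := lt_of_le_of_ne hb (Ne.symm hbne)
        have h := hquad (-(c+1)/(2*b))
        rw [← haz] at h
        field_simp at h
        nlinarith [h, hbp]
      rw [hbz]
      nlinarith [ha, hc]
    · have h := hquad (-(b/a))
      have e1 : a * (-(b/a))^2 + 2 * b * (-(b/a)) + c = c - b^2/a := by
        field_simp
        ring
      rw [e1] at h
      have h2 : b^2/a ≤ c := by linarith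
      calc b^2 = b^2/a * a := by field_simp
        _ ≤ c * a := mul_le_mul_of_nonneg_right h2 (le_of_lt hap)
        _ = a * c := by ring
  -- step 4 : assemble
  have havg0φ : avg k l 0 (fun x => φ x ^ 2) = 2 ^ k * a := by
    unfold avg
    congr 1
    apply setIntegral_congr_fun measurableSet_Ico
    intro x hx
    dsimp only
    rw [walsh_zero_apply, Set.indicator_of_mem (show x ∈ dyadicI k l from hx), mul_one]
  have havg0ψ : avg k l 0 (fun x => ψ x ^ 2) = 2 ^ k * c := by
    unfold avg
    congr 1
    apply setIntegral_congr_fun measurableSet_Ico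
    intro x hx
    dsimp only
    rw [walsh_zero_apply, Set.indicator_of_mem (show x ∈ dyadicI k l from hx), mul_one]
  have hpos : (0:ℝ) < 2 ^ k := zpow_pos (by norm_num) k
  have hJ : avg k l n (fun x => φ x * ψ x)
      = 2 ^ k * ∫ x in dyadicI k l, φ x * ψ x * walsh k l n x := rfl
  set J := ∫ x in dyadicI k l, φ x * ψ x * walsh k l n x with hJdef
  have hsq : J^2 ≤ a * c := by
    have hJb : J^2 ≤ b^2 := by nlinarith [h1, abs_nonneg J, sq_abs J, neg_abs_le J, le_abs_self J]
    exact hJb.trans hb2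
  rw [hJ, havg0φ, havg0ψ]
  have hfin := mul_le_mul_of_nonneg_left hsq (le_of_lt (mul_pos hpos hpos))
  nlinarith [hfin]
/-! ### Step functions give bounded measurable slices and averages -/

lemma BM_const (c : ℝ) : BM (fun _ => c) := ⟨measurable_const, |c|, fun _ => le_refl _⟩

lemma BM_indicator (s : Set ℝ) (hs : MeasurableSet s) :
    BM (fun x => Set.indicator s (1 : ℝ → ℝ) x) := by
  refine ⟨(measurable_one).indicator hs, 1, fun x => ?_⟩
  dsimp only
  by_cases hx : x ∈ s
  · rw [Set.indicator_of_mem hx]; norm_num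
  · rw [Set.indicator_of_notMem hx]; norm_num

lemma BM.finsetSum {ι : Type*} (s : Finset ι) (f : ι → ℝ → ℝ) (h : ∀ i ∈ s, BM (f i)) :
    BM (fun x => ∑ i ∈ s, f i x) := by
  classical
  induction s using Finset.induction_on with
  | empty => exact ⟨by simp [measurable_const], 0, by simp⟩
  | @insert a t ha ih =>
      simp only [Finset.sum_insert ha]
      exact (h a (Finset.mem_insert_self a t)).add
        (ih (fun i hi => h i (Finset.mem_insert_of_mem hi)))

lemma avg_const_mul (k : ℤ) (l m : ℕ) (c : ℝ) (f : ℝ → ℝ) :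
    avg k l m (fun x => c * f x) = c * avg k l m f := by
  unfold avg
  rw [show (fun x => (c * f x) * walsh k l m x) = fun x => c * (f x * walsh k l m x) from
    funext fun x => by ring]
  rw [integral_const_mul]
  ring

lemma avg_finset_sum {ι : Type*} (k : ℤ) (l m : ℕ) (s : Finset ι) (f : ι → ℝ → ℝ)
    (h : ∀ i ∈ s, BM (f i)) :
    avg k l m (fun x => ∑ i ∈ s, f i x) = ∑ i ∈ s, avg k l m (f i) := by
  unfold avg
  rw [show (fun x => (∑ i ∈ s, f i x) * walsh k l m x)
      = fun x => ∑ i ∈ s, f i x * walsh k l m x from funext fun x => Finset.sum_mul ..]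
  rw [integral_finset_sum s (fun i hi => integrableOn_mul_walsh (h i hi) k k l l m)]
  rw [Finset.mul_sum]

lemma BM_Fx {F : ℝ → ℝ → ℝ} (hF : IsDyadicStep F) (y : ℝ) : BM (fun x => F x y) := by
  obtain ⟨s, c, -, hrep⟩ := hF
  have h1 : (fun x => F x y) = fun x => ∑ p ∈ s,
      (c p * Set.indicator (dyadicI p.2.1 p.2.2) 1 y) * Set.indicator (dyadicI p.1.1 p.1.2) 1 x := by
    funext x
    rw [hrep x y]
    exact Finset.sum_congr rfl (fun p _ => by ring)
  rw [h1]
  exact BM.finsetSum s _ (fun p _ => (BM_indicator _ measurableSet_Ico).const_mul _)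

lemma BM_avgF {F : ℝ → ℝ → ℝ} (hF : IsDyadicStep F) (k' : ℤ) (l' m : ℕ) :
    BM (fun y => avg k' l' m (fun x => F x y)) := by
  obtain ⟨s, c, -, hrep⟩ := hF
  have hfn : (fun y => avg k' l' m (fun x => F x y))
      = fun y => ∑ p ∈ s, Set.indicator (dyadicI p.2.1 p.2.2) 1 y *
          (c p * avg k' l' m (fun x => Set.indicator (dyadicI p.1.1 p.1.2) 1 x)) := by
    funext y
    have h1 : (fun x => F x y) = fun x => ∑ p ∈ s,
        (c p * Set.indicator (dyadicI p.2.1 p.2.2) 1 y) * Set.indicator (dyadicI p.1.1 p.1.2) 1 x := by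
      funext x
      rw [hrep x y]
      exact Finset.sum_congr rfl (fun p _ => by ring)
    rw [h1, avg_finset_sum k' l' m s
      (fun p x => c p * Set.indicator (dyadicI p.2.1 p.2.2) 1 y *
        Set.indicator (dyadicI p.1.1 p.1.2) 1 x)
      (fun p _ => (BM_indicator _ measurableSet_Ico).const_mul
        (c p * Set.indicator (dyadicI p.2.1 p.2.2) 1 y))]
    apply Finset.sum_congr rfl
    intro p _
    rw [avg_const_mul]
    ring
  rw [hfn]
  exact BM.finsetSum s _ (fun p _ =>
    (BM_indicator _ measurableSet_Ico).mul (BM_const _))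
/-! ### The algebraic core -/

lemma amgm_cs (pp pm up um vp vm : ℝ) (hup : 0 ≤ up) (hum : 0 ≤ um)
    (hvp : 0 ≤ vp) (hvm : 0 ≤ vm)
    (h1 : pp^2 ≤ up*vp) (h2 : pm^2 ≤ um*vm) :
    -(pp*pm) ≤ (up*um + vp*vm)/2 := by
  set x := Real.sqrt (up*um) with hxdef
  set y := Real.sqrt (vp*vm) with hydef
  have hx : x^2 = up*um := Real.sq_sqrt (mul_nonneg hup hum)
  have hy : y^2 = vp*vm := Real.sq_sqrt (mul_nonneg hvp hvm)
  have hx0 : 0 ≤ x := Real.sqrt_nonneg _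
  have hy0 : 0 ≤ y := Real.sqrt_nonneg _
  have hpp : (pp*pm)^2 ≤ (x*y)^2 := by
    have h3 : pp^2*pm^2 ≤ (up*vp)*(um*vm) :=
      mul_le_mul h1 h2 (sq_nonneg _) (le_trans (sq_nonneg _) h1)
    calc (pp*pm)^2 = pp^2*pm^2 := by ring
      _ ≤ (up*vp)*(um*vm) := h3
      _ = (x*y)^2 := by rw [mul_pow, hx, hy]; ring
  have habs : |pp*pm| ≤ x*y := by
    have h4 := Real.sqrt_le_sqrt hpp
    rwa [Real.sqrt_sq_eq_abs, Real.sqrt_sq (mul_nonneg hx0 hy0)] at h4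
  nlinarith [habs, neg_abs_le (pp*pm), sq_nonneg (x-y), hx, hy]

lemma b4key (q00 q01 q10 q11 s0 s1 : ℝ)
    (hu0p : 0 ≤ q00 + q01 + 2*s0) (hu0m : 0 ≤ q00 + q01 - 2*s0)
    (hu1p : 0 ≤ q10 + q11 + 2*s1) (hu1m : 0 ≤ q10 + q11 - 2*s1) :
    (1/2)*((q00+q01+2*s0)*(q00+q01-2*s0) + (q10+q11+2*s1)*(q10+q11-2*s1))
      ≤ 4*(q00^2+q01^2+q10^2+q11^2)
        - (1/4)*((q00+q01+2*s0)+(q10+q11+2*s1))^2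
        - (1/4)*((q00+q01-2*s0)+(q10+q11-2*s1))^2 := by
  nlinarith [sq_nonneg (q00-q01), sq_nonneg (q10-q11),
    sq_nonneg (q00+q01+2*s0-(q10+q11+2*s1)), sq_nonneg (q00+q01-2*s0-(q10+q11-2*s1)),
    mul_nonneg hu0p hu0m, mul_nonneg hu1p hu1m]

set_option maxHeartbeats 1000000 in
lemma key_alg (a00 a01 a10 a11 p00 p01 p10 p11 x0 x1
    q00 q01 q10 q11 r00 r01 r10 r11 s0 s1 t0 t1 : ℝ)
    (hu0p : 0 ≤ q00 + q01 + 2*s0) (hu0m : 0 ≤ q00 + q01 - 2*s0)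
    (hu1p : 0 ≤ q10 + q11 + 2*s1) (hu1m : 0 ≤ q10 + q11 - 2*s1)
    (hv0p : 0 ≤ r00 + r01 + 2*t0) (hv0m : 0 ≤ r00 + r01 - 2*t0)
    (hv1p : 0 ≤ r10 + r11 + 2*t1) (hv1m : 0 ≤ r10 + r11 - 2*t1)
    (hc0p : (p00 + p01 + x0)^2 ≤ (q00 + q01 + 2*s0) * (r00 + r01 + 2*t0))
    (hc0m : (p00 + p01 - x0)^2 ≤ (q00 + q01 - 2*s0) * (r00 + r01 - 2*t0))
    (hc1p : (p10 + p11 + x1)^2 ≤ (q10 + q11 + 2*s1) * (r10 + r11 + 2*t1))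
    (hc1m : (p10 + p11 - x1)^2 ≤ (q10 + q11 - 2*s1) * (r10 + r11 - 2*t1)) :
    ((1/4*(a00*p00+a01*p01+a10*p10+a11*p11) - ((1/2*(1/2*(a00+a01) + 1/2*(a10+a11)))*(1/2*((1/4*(p00+p01+x0)) + (1/4*(p10+p11+x1)))) + (1/2*(1/2*(a00+a01) - 1/2*(a10+a11)))*(1/2*((1/4*(p00+p01-x0)) - (1/4*(p10+p11-x1)))))) - (1/4*(a00^2+a01^2+a10^2+a11^2) - ((1/2*(1/2*(a00+a01) + 1/2*(a10+a11)))^2 + (1/2*(1/2*(a00+a01) - 1/2*(a10+a11)))^2)) - 1/2*(1/4*(p00^2+p01^2+p10^2+p11^2) - ((1/2*((1/4*(p00+p01+x0)) + (1/4*(p10+p11+x1))))^2 + (1/2*((1/4*(p00+p01-x0)) - (1/4*(p10+p11-x1))))^2)) - 1/2*(1/4*(q00^2+q01^2+q10^2+q11^2) - ((1/2*((1/4*(q00+q01+2*s0)) + (1/4*(q10+q11+2*s1))))^2 + (1/2*((1/4*(q00+q01-2*s0)) + (1/4*(q10+q11-2*s1))))^2)) - 1/2*(1/4*(r00^2+r01^2+r10^2+r11^2)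 - ((1/2*((1/4*(r00+r01+2*t0)) + (1/4*(r10+r11+2*t1))))^2 + (1/2*((1/4*(r00+r01-2*t0)) + (1/4*(r10+r11-2*t1))))^2))) ≤ ((1/2*(1/2*(a00+a01) + 1/2*(a10+a11)))*(1/2*((1/4*(p00+p01-x0)) + (1/4*(p10+p11-x1)))) + (1/2*(1/2*(a00+a01) - 1/2*(a10+a11)))*(1/2*((1/4*(p00+p01+x0)) - (1/4*(p10+p11+x1))))) ∧ ((1/2*(1/2*(a00+a01) + 1/2*(a10+a11)))*(1/2*((1/4*(p00+p01-x0)) + (1/4*(p10+p11-x1)))) + (1/2*(1/2*(a00+a01) - 1/2*(a10+a11)))*(1/2*((1/4*(p00+p01+x0)) - (1/4*(p10+p11+x1))))) ≤ ((1/4*(a00*p00+a01*p01+a10*p10+a11*p11) - ((1/2*(1/2*(a00+a01) + 1/2*(a10+a11)))*(1/2*((1/4*(p00+p01+x0)) + (1/4*(p10+p11+x1)))) + (1/2*(1/2*(a00+a01) - 1/2*(a10+a11)))*(1/2*((1/4*(p00+p01-x0)) - (1/4*(p10+p11-x1)))))) + (1/4*(a00^2+a01^2+a10^2+a11^2) -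 ((1/2*(1/2*(a00+a01) + 1/2*(a10+a11)))^2 + (1/2*(1/2*(a00+a01) - 1/2*(a10+a11)))^2)) + 1/2*(1/4*(p00^2+p01^2+p10^2+p11^2) - ((1/2*((1/4*(p00+p01+x0)) + (1/4*(p10+p11+x1))))^2 + (1/2*((1/4*(p00+p01-x0)) - (1/4*(p10+p11-x1))))^2)) + 1/2*(1/4*(q00^2+q01^2+q10^2+q11^2) - ((1/2*((1/4*(q00+q01+2*s0)) + (1/4*(q10+q11+2*s1))))^2 + (1/2*((1/4*(q00+q01-2*s0)) + (1/4*(q10+q11-2*s1))))^2)) + 1/2*(1/4*(r00^2+r01^2+r10^2+r11^2) - ((1/2*((1/4*(r00+r01+2*t0)) + (1/4*(r10+r11+2*t1))))^2 + (1/2*((1/4*(r00+r01-2*t0)) + (1/4*(r10+r11-2*t1))))^2))) := by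
  have h5a0 := amgm_cs (p00+p01+x0) (p00+p01-x0) (q00+q01+2*s0) (q00+q01-2*s0)
    (r00+r01+2*t0) (r00+r01-2*t0) hu0p hu0m hv0p hv0m hc0p hc0m
  have h5a1 := amgm_cs (p10+p11+x1) (p10+p11-x1) (q10+q11+2*s1) (q10+q11-2*s1)
    (r10+r11+2*t1) (r10+r11-2*t1) hu1p hu1m hv1p hv1m hc1p hc1m
  have hb4 := b4key q00 q01 q10 q11 s0 s1 hu0p hu0m hu1p hu1m
  have hb5 := b4key r00 r01 r10 r11 t0 t1 hv0p hv0m hv1p hv1m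
  constructor <;>
  linarith [h5a0, h5a1, hb4, hb5,
    sq_nonneg (a00-a01+(p00-p01)/2), sq_nonneg (a10-a11+(p10-p11)/2),
    sq_nonneg (a00-a01-(p00-p01)/2), sq_nonneg (a10-a11-(p10-p11)/2),
    sq_nonneg (p00+p01-x1), sq_nonneg (p10+p11-x0),
    sq_nonneg (p00-p01), sq_nonneg (p10-p11)]
theorem key_local_estimate (F₁ F₂ F₃ : ℝ → ℝ → ℝ)
    (h₁ : IsDyadicStep F₁) (h₂ : IsDyadicStep F₂) (h₃ : IsDyadicStep F₃)
    (k : ℤ) (l₁ l₂ n : ℕ) :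
    boxB (Bminus F₁ F₂ F₃) k l₁ l₂ n ≤ Aform F₁ F₂ F₃ k l₁ l₂ n ∧
    Aform F₁ F₂ F₃ k l₁ l₂ n ≤ boxB (Bplus F₁ F₂ F₃) k l₁ l₂ n := by
  have bm_e0 : BM (fun y => avg (k + 1) (2 * l₁) 0 fun x => F₁ x y) := BM_avgF h₁ _ _ _
  have bm_e1 : BM (fun y => avg (k + 1) (2 * l₁ + 1) 0 fun x => F₁ x y) := BM_avgF h₁ _ _ _
  have bm_f0 : BM (fun y => avg (k + 1) (2 * l₁) n fun x => F₂ x y) := BM_avgF h₂ _ _ _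
  have bm_f1 : BM (fun y => avg (k + 1) (2 * l₁ + 1) n fun x => F₂ x y) := BM_avgF h₂ _ _ _
  have bm_g0 : BM (fun y => avg (k + 1) (2 * l₁) n fun x => F₃ x y) := BM_avgF h₃ _ _ _
  have bm_g1 : BM (fun y => avg (k + 1) (2 * l₁ + 1) n fun x => F₃ x y) := BM_avgF h₃ _ _ _
  have bm_PE : BM (fun y => avg k l₁ 0 fun x => F₁ x y) := BM_avgF h₁ _ _ _
  have bm_prod0 : BM (fun y => (avg k l₁ (2 * n) fun x => F₂ x y) * (avg k l₁ (2 * n) fun x => F₃ x y)) := (BM_avgF h₂ _ _ _).mul (BM_avgF h₃ _ _ _)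
  have bm_sqf0 : BM (fun y => (avg k l₁ (2 * n) fun x => F₂ x y) ^ 2) := (BM_avgF h₂ _ _ _).sq
  have bm_sqg0 : BM (fun y => (avg k l₁ (2 * n) fun x => F₃ x y) ^ 2) := (BM_avgF h₃ _ _ _).sq
  have bm_prod1 : BM (fun y => (avg k l₁ (2 * n + 1) fun x => F₂ x y) * (avg k l₁ (2 * n + 1) fun x => F₃ x y)) := (BM_avgF h₂ _ _ _).mul (BM_avgF h₃ _ _ _)
  have bm_sqf1 : BM (fun y => (avg k l₁ (2 * n + 1) fun x => F₂ x y) ^ 2) := (BM_avgF h₂ _ _ _).sq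
  have bm_sqg1 : BM (fun y => (avg k l₁ (2 * n + 1) fun x => F₃ x y) ^ 2) := (BM_avgF h₃ _ _ _).sq
  have hx1 : ∀ y : ℝ, (avg k l₁ 0 fun x => F₁ x y) = 1/2 * (avg (k + 1) (2 * l₁) 0 fun x => F₁ x y) + 1/2 * (avg (k + 1) (2 * l₁ + 1) 0 fun x => F₁ x y) := fun y => avg_split00 _ (BM_Fx h₁ y)
  have hx20 : ∀ y : ℝ, (avg k l₁ (2 * n) fun x => F₂ x y) = 1/2 * (avg (k + 1) (2 * l₁) n fun x => F₂ x y) + 1/2 * (avg (k + 1) (2 * l₁ + 1) n fun x => F₂ x y) := fun y => avg_split0 n _ (BM_Fx h₂ y)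
  have hx21 : ∀ y : ℝ, (avg k l₁ (2 * n + 1) fun x => F₂ x y) = 1/2 * (avg (k + 1) (2 * l₁) n fun x => F₂ x y) - 1/2 * (avg (k + 1) (2 * l₁ + 1) n fun x => F₂ x y) := fun y => avg_split1 n _ (BM_Fx h₂ y)
  have hx30 : ∀ y : ℝ, (avg k l₁ (2 * n) fun x => F₃ x y) = 1/2 * (avg (k + 1) (2 * l₁) n fun x => F₃ x y) + 1/2 * (avg (k + 1) (2 * l₁ + 1) n fun x => F₃ x y) := fun y => avg_split0 n _ (BM_Fx h₃ y)
  have hx31 : ∀ y : ℝ, (avg k l₁ (2 * n + 1) fun x => F₃ x y) = 1/2 * (avg (k + 1) (2 * l₁) n fun x => F₃ x y) - 1/2 * (avg (k + 1) (2 * l₁ + 1) n fun x => F₃ x y) := fun y => avg_split1 n _ (BM_Fx h₃ y)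
  set a00 : ℝ := avg (k + 1) (2 * l₂) n (fun y => avg (k + 1) (2 * l₁) 0 fun x => F₁ x y) with hda00
  set p00 : ℝ := avg (k + 1) (2 * l₂) n (fun y => (avg (k + 1) (2 * l₁) n fun x => F₂ x y) * (avg (k + 1) (2 * l₁) n fun x => F₃ x y)) with hdp00
  set q00 : ℝ := avg (k + 1) (2 * l₂) 0 (fun y => (avg (k + 1) (2 * l₁) n fun x => F₂ x y) ^ 2) with hdq00
  set r00 : ℝ := avg (k + 1) (2 * l₂) 0 (fun y => (avg (k + 1) (2 * l₁) n fun x => F₃ x y) ^ 2) with hdr00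
  set a01 : ℝ := avg (k + 1) (2 * l₂) n (fun y => avg (k + 1) (2 * l₁ + 1) 0 fun x => F₁ x y) with hda01
  set p01 : ℝ := avg (k + 1) (2 * l₂) n (fun y => (avg (k + 1) (2 * l₁ + 1) n fun x => F₂ x y) * (avg (k + 1) (2 * l₁ + 1) n fun x => F₃ x y)) with hdp01
  set q01 : ℝ := avg (k + 1) (2 * l₂) 0 (fun y => (avg (k + 1) (2 * l₁ + 1) n fun x => F₂ x y) ^ 2) with hdq01
  set r01 : ℝ := avg (k + 1) (2 * l₂) 0 (fun y => (avg (k + 1) (2 * l₁ + 1) n fun x => F₃ x y) ^ 2) with hdr01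
  set x0 : ℝ := avg (k + 1) (2 * l₂) n (fun y => (avg (k + 1) (2 * l₁) n fun x => F₂ x y) * (avg (k + 1) (2 * l₁ + 1) n fun x => F₃ x y) + (avg (k + 1) (2 * l₁ + 1) n fun x => F₂ x y) * (avg (k + 1) (2 * l₁) n fun x => F₃ x y)) with hdx0
  set s0 : ℝ := avg (k + 1) (2 * l₂) 0 (fun y => (avg (k + 1) (2 * l₁) n fun x => F₂ x y) * (avg (k + 1) (2 * l₁ + 1) n fun x => F₂ x y)) with hds0
  set t0 : ℝ := avg (k + 1) (2 * l₂) 0 (fun y => (avg (k + 1) (2 * l₁) n fun x => F₃ x y) * (avg (k + 1) (2 * l₁ + 1) n fun x => F₃ x y)) with hdt0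
  set a10 : ℝ := avg (k + 1) (2 * l₂ + 1) n (fun y => avg (k + 1) (2 * l₁) 0 fun x => F₁ x y) with hda10
  set p10 : ℝ := avg (k + 1) (2 * l₂ + 1) n (fun y => (avg (k + 1) (2 * l₁) n fun x => F₂ x y) * (avg (k + 1) (2 * l₁) n fun x => F₃ x y)) with hdp10
  set q10 : ℝ := avg (k + 1) (2 * l₂ + 1) 0 (fun y => (avg (k + 1) (2 * l₁) n fun x => F₂ x y) ^ 2) with hdq10
  set r10 : ℝ := avg (k + 1) (2 * l₂ + 1) 0 (fun y => (avg (k + 1) (2 * l₁) n fun x => F₃ x y) ^ 2) with hdr10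
  set a11 : ℝ := avg (k + 1) (2 * l₂ + 1) n (fun y => avg (k + 1) (2 * l₁ + 1) 0 fun x => F₁ x y) with hda11
  set p11 : ℝ := avg (k + 1) (2 * l₂ + 1) n (fun y => (avg (k + 1) (2 * l₁ + 1) n fun x => F₂ x y) * (avg (k + 1) (2 * l₁ + 1) n fun x => F₃ x y)) with hdp11
  set q11 : ℝ := avg (k + 1) (2 * l₂ + 1) 0 (fun y => (avg (k + 1) (2 * l₁ + 1) n fun x => F₂ x y) ^ 2) with hdq11
  set r11 : ℝ := avg (k + 1) (2 * l₂ + 1) 0 (fun y => (avg (k + 1) (2 * l₁ + 1) n fun x => F₃ x y) ^ 2) with hdr11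
  set x1 : ℝ := avg (k + 1) (2 * l₂ + 1) n (fun y => (avg (k + 1) (2 * l₁) n fun x => F₂ x y) * (avg (k + 1) (2 * l₁ + 1) n fun x => F₃ x y) + (avg (k + 1) (2 * l₁ + 1) n fun x => F₂ x y) * (avg (k + 1) (2 * l₁) n fun x => F₃ x y)) with hdx1
  set s1 : ℝ := avg (k + 1) (2 * l₂ + 1) 0 (fun y => (avg (k + 1) (2 * l₁) n fun x => F₂ x y) * (avg (k + 1) (2 * l₁ + 1) n fun x => F₂ x y)) with hds1
  set t1 : ℝ := avg (k + 1) (2 * l₂ + 1) 0 (fun y => (avg (k + 1) (2 * l₁) n fun x => F₃ x y) * (avg (k + 1) (2 * l₁ + 1) n fun x => F₃ x y)) with hdt1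
  have hyA0 : avg (k + 1) (2 * l₂) n (fun y => avg k l₁ 0 fun x => F₁ x y) = 1/2 * a00 + 1/2 * a01 := by
    calc avg (k + 1) (2 * l₂) n (fun y => avg k l₁ 0 fun x => F₁ x y)
        = avg (k + 1) (2 * l₂) n (fun y => 1/2 * (avg (k + 1) (2 * l₁) 0 fun x => F₁ x y) + 1/2 * (avg (k + 1) (2 * l₁ + 1) 0 fun x => F₁ x y)) := avg_congr _ _ _ hx1
      _ = 1/2 * avg (k + 1) (2 * l₂) n (fun y => avg (k + 1) (2 * l₁) 0 fun x => F₁ x y) + 1/2 * avg (k + 1) (2 * l₂) n (fun y => avg (k + 1) (2 * l₁ + 1) 0 fun x => F₁ x y) := avg_lin2 _ _ _ _ _ _ _ bm_e0 bm_e1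
      _ = 1/2 * a00 + 1/2 * a01 := by rw [hda00, hda01]
  have hyA1 : avg (k + 1) (2 * l₂ + 1) n (fun y => avg k l₁ 0 fun x => F₁ x y) = 1/2 * a10 + 1/2 * a11 := by
    calc avg (k + 1) (2 * l₂ + 1) n (fun y => avg k l₁ 0 fun x => F₁ x y)
        = avg (k + 1) (2 * l₂ + 1) n (fun y => 1/2 * (avg (k + 1) (2 * l₁) 0 fun x => F₁ x y) + 1/2 * (avg (k + 1) (2 * l₁ + 1) 0 fun x => F₁ x y)) := avg_congr _ _ _ hx1
      _ = 1/2 * avg (k + 1) (2 * l₂ + 1) n (fun y => avg (k + 1) (2 * l₁) 0 fun x => F₁ x y) + 1/2 * avg (k + 1) (2 * l₂ + 1) n (fun y => avg (k + 1) (2 * l₁ + 1) 0 fun x => F₁ x y) := avg_lin2 _ _ _ _ _ _ _ bm_e0 bm_e1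
      _ = 1/2 * a10 + 1/2 * a11 := by rw [hda10, hda11]
  have hyP00 : avg (k + 1) (2 * l₂) n (fun y => (avg k l₁ (2 * n) fun x => F₂ x y) * (avg k l₁ (2 * n) fun x => F₃ x y)) = 1/4 * p00 + 1/4 * p01 + (1/4) * x0 := by
    calc avg (k + 1) (2 * l₂) n (fun y => (avg k l₁ (2 * n) fun x => F₂ x y) * (avg k l₁ (2 * n) fun x => F₃ x y))
        = avg (k + 1) (2 * l₂) n (fun y => 1/4 * ((avg (k + 1) (2 * l₁) n fun x => F₂ x y) * (avg (k + 1) (2 * l₁) n fun x => F₃ x y)) + 1/4 * ((avg (k + 1) (2 * l₁ + 1) n fun x => F₂ x y) * (avg (k + 1) (2 * l₁ + 1) n fun x => F₃ x y)) + (1/4) * ((avg (k + 1) (2 * l₁) n fun x => F₂ x y) * (avg (k + 1) (2 * l₁ + 1) n fun x => F₃ x y) + (avg (k + 1) (2 * l₁ + 1) n fun x => F₂ x y) * (avg (k + 1) (2 * l₁) n fun x => F₃ x y))) := avg_congr _ _ _ (fun y => by rw [hx20 y, hx30 y]; ring)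
      _ = 1/4 * avg (k + 1) (2 * l₂) n (fun y => (avg (k + 1) (2 * l₁) n fun x => F₂ x y) * (avg (k + 1) (2 * l₁) n fun x => F₃ x y)) + 1/4 * avg (k + 1) (2 * l₂) n (fun y => (avg (k + 1) (2 * l₁ + 1) n fun x => F₂ x y) * (avg (k + 1) (2 * l₁ + 1) n fun x => F₃ x y)) + (1/4) * avg (k + 1) (2 * l₂) n (fun y => (avg (k + 1) (2 * l₁) n fun x => F₂ x y) * (avg (k + 1) (2 * l₁ + 1) n fun x => F₃ x y) + (avg (k + 1) (2 * l₁ + 1) n fun x => F₂ x y) * (avg (k + 1) (2 * l₁) n fun x => F₃ x y)) := avg_lin3 _ _ _ _ _ _ _ _ _ (bm_f0.mul bm_g0) (bm_f1.mul bm_g1) ((bm_f0.mul bm_g1).add (bm_f1.mul bm_g0))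
      _ = 1/4 * p00 + 1/4 * p01 + (1/4) * x0 := by rw [hdp00, hdp01, hdx0]
  have hyP01 : avg (k + 1) (2 * l₂) n (fun y => (avg k l₁ (2 * n + 1) fun x => F₂ x y) * (avg k l₁ (2 * n + 1) fun x => F₃ x y)) = 1/4 * p00 + 1/4 * p01 + (-(1/4)) * x0 := by
    calc avg (k + 1) (2 * l₂) n (fun y => (avg k l₁ (2 * n + 1) fun x => F₂ x y) * (avg k l₁ (2 * n + 1) fun x => F₃ x y))
        = avg (k + 1) (2 * l₂) n (fun y => 1/4 * ((avg (k + 1) (2 * l₁) n fun x => F₂ x y) * (avg (k + 1) (2 * l₁) n fun x => F₃ x y)) + 1/4 * ((avg (k + 1) (2 * l₁ + 1) n fun x => F₂ x y) * (avg (k + 1) (2 * l₁ + 1) n fun x => F₃ x y)) + (-(1/4)) * ((avg (k + 1) (2 * l₁) n fun x => F₂ x y) * (avg (k + 1) (2 * l₁ + 1) n fun x => F₃ x y) + (avg (k + 1) (2 * l₁ + 1) n fun x => F₂ x y) * (avg (k + 1) (2 * l₁) n fun x => F₃ x y))) := avg_congr _ _ _ (fun y => by rw [hx21 y, hx31 y];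 ring)
      _ = 1/4 * avg (k + 1) (2 * l₂) n (fun y => (avg (k + 1) (2 * l₁) n fun x => F₂ x y) * (avg (k + 1) (2 * l₁) n fun x => F₃ x y)) + 1/4 * avg (k + 1) (2 * l₂) n (fun y => (avg (k + 1) (2 * l₁ + 1) n fun x => F₂ x y) * (avg (k + 1) (2 * l₁ + 1) n fun x => F₃ x y)) + (-(1/4)) * avg (k + 1) (2 * l₂) n (fun y => (avg (k + 1) (2 * l₁) n fun x => F₂ x y) * (avg (k + 1) (2 * l₁ + 1) n fun x => F₃ x y) + (avg (k + 1) (2 * l₁ + 1) n fun x => F₂ x y) * (avg (k + 1) (2 * l₁) n fun x => F₃ x y)) := avg_lin3 _ _ _ _ _ _ _ _ _ (bm_f0.mul bm_g0) (bm_f1.mul bm_g1) ((bm_f0.mul bm_g1).add (bm_f1.mul bm_g0))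
      _ = 1/4 * p00 + 1/4 * p01 + (-(1/4)) * x0 := by rw [hdp00, hdp01, hdx0]
  have hyP10 : avg (k + 1) (2 * l₂ + 1) n (fun y => (avg k l₁ (2 * n) fun x => F₂ x y) * (avg k l₁ (2 * n) fun x => F₃ x y)) = 1/4 * p10 + 1/4 * p11 + (1/4) * x1 := by
    calc avg (k + 1) (2 * l₂ + 1) n (fun y => (avg k l₁ (2 * n) fun x => F₂ x y) * (avg k l₁ (2 * n) fun x => F₃ x y))
        = avg (k + 1) (2 * l₂ + 1) n (fun y => 1/4 * ((avg (k + 1) (2 * l₁) n fun x => F₂ x y) * (avg (k + 1) (2 * l₁) n fun x => F₃ x y)) + 1/4 * ((avg (k + 1) (2 * l₁ + 1) n fun x => F₂ x y) * (avg (k + 1) (2 * l₁ + 1) n fun x => F₃ x y)) + (1/4) * ((avg (k + 1) (2 * l₁) n fun x => F₂ x y) * (avg (k + 1) (2 * l₁ + 1) n fun x => F₃ x y) + (avg (k + 1) (2 * l₁ + 1) n fun x => F₂ x y) * (avg (k + 1) (2 * l₁) n fun x => F₃ x y))) := avg_congr _ _ _ (fun y => by rw [hx20 y, hx30 y]; 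ring)
      _ = 1/4 * avg (k + 1) (2 * l₂ + 1) n (fun y => (avg (k + 1) (2 * l₁) n fun x => F₂ x y) * (avg (k + 1) (2 * l₁) n fun x => F₃ x y)) + 1/4 * avg (k + 1) (2 * l₂ + 1) n (fun y => (avg (k + 1) (2 * l₁ + 1) n fun x => F₂ x y) * (avg (k + 1) (2 * l₁ + 1) n fun x => F₃ x y)) + (1/4) * avg (k + 1) (2 * l₂ + 1) n (fun y => (avg (k + 1) (2 * l₁) n fun x => F₂ x y) * (avg (k + 1) (2 * l₁ + 1) n fun x => F₃ x y) + (avg (k + 1) (2 * l₁ + 1) n fun x => F₂ x y) * (avg (k + 1) (2 * l₁) n fun x => F₃ x y)) := avg_lin3 _ _ _ _ _ _ _ _ _ (bm_f0.mul bm_g0) (bm_f1.mul bm_g1) ((bm_f0.mul bm_g1).add (bm_f1.mul bm_g0))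
      _ = 1/4 * p10 + 1/4 * p11 + (1/4) * x1 := by rw [hdp10, hdp11, hdx1]
  have hyP11 : avg (k + 1) (2 * l₂ + 1) n (fun y => (avg k l₁ (2 * n + 1) fun x => F₂ x y) * (avg k l₁ (2 * n + 1) fun x => F₃ x y)) = 1/4 * p10 + 1/4 * p11 + (-(1/4)) * x1 := by
    calc avg (k + 1) (2 * l₂ + 1) n (fun y => (avg k l₁ (2 * n + 1) fun x => F₂ x y) * (avg k l₁ (2 * n + 1) fun x => F₃ x y))
        = avg (k + 1) (2 * l₂ + 1) n (fun y => 1/4 * ((avg (k + 1) (2 * l₁) n fun x => F₂ x y) * (avg (k + 1) (2 * l₁) n fun x => F₃ x y)) + 1/4 * ((avg (k + 1) (2 * l₁ + 1) n fun x => F₂ x y) * (avg (k + 1) (2 * l₁ + 1) n fun x => F₃ x y)) + (-(1/4)) * ((avg (k + 1) (2 * l₁) n fun x => F₂ x y) * (avg (k + 1) (2 * l₁ + 1) n fun x => F₃ x y) + (avg (k + 1) (2 * l₁ + 1) n fun x => F₂ x y) * (avg (k + 1) (2 * l₁) n fun x => F₃ x y))) := avg_congr _ _ _ (fun y => by rw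 [hx21 y, hx31 y]; ring)
      _ = 1/4 * avg (k + 1) (2 * l₂ + 1) n (fun y => (avg (k + 1) (2 * l₁) n fun x => F₂ x y) * (avg (k + 1) (2 * l₁) n fun x => F₃ x y)) + 1/4 * avg (k + 1) (2 * l₂ + 1) n (fun y => (avg (k + 1) (2 * l₁ + 1) n fun x => F₂ x y) * (avg (k + 1) (2 * l₁ + 1) n fun x => F₃ x y)) + (-(1/4)) * avg (k + 1) (2 * l₂ + 1) n (fun y => (avg (k + 1) (2 * l₁) n fun x => F₂ x y) * (avg (k + 1) (2 * l₁ + 1) n fun x => F₃ x y) + (avg (k + 1) (2 * l₁ + 1) n fun x => F₂ x y) * (avg (k + 1) (2 * l₁) n fun x => F₃ x y)) := avg_lin3 _ _ _ _ _ _ _ _ _ (bm_f0.mul bm_g0) (bm_f1.mul bm_g1) ((bm_f0.mul bm_g1).add (bm_f1.mul bm_g0))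
      _ = 1/4 * p10 + 1/4 * p11 + (-(1/4)) * x1 := by rw [hdp10, hdp11, hdx1]
  have hySq00 : avg (k + 1) (2 * l₂) 0 (fun y => (avg k l₁ (2 * n) fun x => F₂ x y) ^ 2) = 1/4 * q00 + 1/4 * q01 + (1/2) * s0 := by
    calc avg (k + 1) (2 * l₂) 0 (fun y => (avg k l₁ (2 * n) fun x => F₂ x y) ^ 2)
        = avg (k + 1) (2 * l₂) 0 (fun y => 1/4 * ((avg (k + 1) (2 * l₁) n fun x => F₂ x y) ^ 2) + 1/4 * ((avg (k + 1) (2 * l₁ + 1) n fun x => F₂ x y) ^ 2) + (1/2) * ((avg (k + 1) (2 * l₁) n fun x => F₂ x y) * (avg (k + 1) (2 * l₁ + 1) n fun x => F₂ x y))) := avg_congr _ _ _ (fun y => by rw [hx20 y]; ring)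
      _ = 1/4 * avg (k + 1) (2 * l₂) 0 (fun y => (avg (k + 1) (2 * l₁) n fun x => F₂ x y) ^ 2) + 1/4 * avg (k + 1) (2 * l₂) 0 (fun y => (avg (k + 1) (2 * l₁ + 1) n fun x => F₂ x y) ^ 2) + (1/2) * avg (k + 1) (2 * l₂) 0 (fun y => (avg (k + 1) (2 * l₁) n fun x => F₂ x y) * (avg (k + 1) (2 * l₁ + 1) n fun x => F₂ x y)) := avg_lin3 _ _ _ _ _ _ _ _ _ (bm_f0.sq) (bm_f1.sq) (bm_f0.mul bm_f1)
      _ = 1/4 * q00 + 1/4 * q01 + (1/2) * s0 := by rw [hdq00, hdq01, hds0]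
  have hySr00 : avg (k + 1) (2 * l₂) 0 (fun y => (avg k l₁ (2 * n) fun x => F₃ x y) ^ 2) = 1/4 * r00 + 1/4 * r01 + (1/2) * t0 := by
    calc avg (k + 1) (2 * l₂) 0 (fun y => (avg k l₁ (2 * n) fun x => F₃ x y) ^ 2)
        = avg (k + 1) (2 * l₂) 0 (fun y => 1/4 * ((avg (k + 1) (2 * l₁) n fun x => F₃ x y) ^ 2) + 1/4 * ((avg (k + 1) (2 * l₁ + 1) n fun x => F₃ x y) ^ 2) + (1/2) * ((avg (k + 1) (2 * l₁) n fun x => F₃ x y) * (avg (k + 1) (2 * l₁ + 1) n fun x => F₃ x y))) := avg_congr _ _ _ (fun y => by rw [hx30 y]; ring)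
      _ = 1/4 * avg (k + 1) (2 * l₂) 0 (fun y => (avg (k + 1) (2 * l₁) n fun x => F₃ x y) ^ 2) + 1/4 * avg (k + 1) (2 * l₂) 0 (fun y => (avg (k + 1) (2 * l₁ + 1) n fun x => F₃ x y) ^ 2) + (1/2) * avg (k + 1) (2 * l₂) 0 (fun y => (avg (k + 1) (2 * l₁) n fun x => F₃ x y) * (avg (k + 1) (2 * l₁ + 1) n fun x => F₃ x y)) := avg_lin3 _ _ _ _ _ _ _ _ _ (bm_g0.sq) (bm_g1.sq) (bm_g0.mul bm_g1)
      _ = 1/4 * r00 + 1/4 * r01 + (1/2) * t0 := by rw [hdr00, hdr01, hdt0]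
  have hySq01 : avg (k + 1) (2 * l₂) 0 (fun y => (avg k l₁ (2 * n + 1) fun x => F₂ x y) ^ 2) = 1/4 * q00 + 1/4 * q01 + (-(1/2)) * s0 := by
    calc avg (k + 1) (2 * l₂) 0 (fun y => (avg k l₁ (2 * n + 1) fun x => F₂ x y) ^ 2)
        = avg (k + 1) (2 * l₂) 0 (fun y => 1/4 * ((avg (k + 1) (2 * l₁) n fun x => F₂ x y) ^ 2) + 1/4 * ((avg (k + 1) (2 * l₁ + 1) n fun x => F₂ x y) ^ 2) + (-(1/2)) * ((avg (k + 1) (2 * l₁) n fun x => F₂ x y) * (avg (k + 1) (2 * l₁ + 1) n fun x => F₂ x y))) := avg_congr _ _ _ (fun y => by rw [hx21 y]; ring)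
      _ = 1/4 * avg (k + 1) (2 * l₂) 0 (fun y => (avg (k + 1) (2 * l₁) n fun x => F₂ x y) ^ 2) + 1/4 * avg (k + 1) (2 * l₂) 0 (fun y => (avg (k + 1) (2 * l₁ + 1) n fun x => F₂ x y) ^ 2) + (-(1/2)) * avg (k + 1) (2 * l₂) 0 (fun y => (avg (k + 1) (2 * l₁) n fun x => F₂ x y) * (avg (k + 1) (2 * l₁ + 1) n fun x => F₂ x y)) := avg_lin3 _ _ _ _ _ _ _ _ _ (bm_f0.sq) (bm_f1.sq) (bm_f0.mul bm_f1)
      _ = 1/4 * q00 + 1/4 * q01 + (-(1/2)) * s0 := by rw [hdq00, hdq01, hds0]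
  have hySr01 : avg (k + 1) (2 * l₂) 0 (fun y => (avg k l₁ (2 * n + 1) fun x => F₃ x y) ^ 2) = 1/4 * r00 + 1/4 * r01 + (-(1/2)) * t0 := by
    calc avg (k + 1) (2 * l₂) 0 (fun y => (avg k l₁ (2 * n + 1) fun x => F₃ x y) ^ 2)
        = avg (k + 1) (2 * l₂) 0 (fun y => 1/4 * ((avg (k + 1) (2 * l₁) n fun x => F₃ x y) ^ 2) + 1/4 * ((avg (k + 1) (2 * l₁ + 1) n fun x => F₃ x y) ^ 2) + (-(1/2)) * ((avg (k + 1) (2 * l₁) n fun x => F₃ x y) * (avg (k + 1) (2 * l₁ + 1) n fun x => F₃ x y))) := avg_congr _ _ _ (fun y => by rw [hx31 y]; ring)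
      _ = 1/4 * avg (k + 1) (2 * l₂) 0 (fun y => (avg (k + 1) (2 * l₁) n fun x => F₃ x y) ^ 2) + 1/4 * avg (k + 1) (2 * l₂) 0 (fun y => (avg (k + 1) (2 * l₁ + 1) n fun x => F₃ x y) ^ 2) + (-(1/2)) * avg (k + 1) (2 * l₂) 0 (fun y => (avg (k + 1) (2 * l₁) n fun x => F₃ x y) * (avg (k + 1) (2 * l₁ + 1) n fun x => F₃ x y)) := avg_lin3 _ _ _ _ _ _ _ _ _ (bm_g0.sq) (bm_g1.sq) (bm_g0.mul bm_g1)
      _ = 1/4 * r00 + 1/4 * r01 + (-(1/2)) * t0 := by rw [hdr00, hdr01, hdt0]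
  have hySq10 : avg (k + 1) (2 * l₂ + 1) 0 (fun y => (avg k l₁ (2 * n) fun x => F₂ x y) ^ 2) = 1/4 * q10 + 1/4 * q11 + (1/2) * s1 := by
    calc avg (k + 1) (2 * l₂ + 1) 0 (fun y => (avg k l₁ (2 * n) fun x => F₂ x y) ^ 2)
        = avg (k + 1) (2 * l₂ + 1) 0 (fun y => 1/4 * ((avg (k + 1) (2 * l₁) n fun x => F₂ x y) ^ 2) + 1/4 * ((avg (k + 1) (2 * l₁ + 1) n fun x => F₂ x y) ^ 2) + (1/2) * ((avg (k + 1) (2 * l₁) n fun x => F₂ x y) * (avg (k + 1) (2 * l₁ + 1) n fun x => F₂ x y))) := avg_congr _ _ _ (fun y => by rw [hx20 y]; ring)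
      _ = 1/4 * avg (k + 1) (2 * l₂ + 1) 0 (fun y => (avg (k + 1) (2 * l₁) n fun x => F₂ x y) ^ 2) + 1/4 * avg (k + 1) (2 * l₂ + 1) 0 (fun y => (avg (k + 1) (2 * l₁ + 1) n fun x => F₂ x y) ^ 2) + (1/2) * avg (k + 1) (2 * l₂ + 1) 0 (fun y => (avg (k + 1) (2 * l₁) n fun x => F₂ x y) * (avg (k + 1) (2 * l₁ + 1) n fun x => F₂ x y)) := avg_lin3 _ _ _ _ _ _ _ _ _ (bm_f0.sq) (bm_f1.sq) (bm_f0.mul bm_f1)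
      _ = 1/4 * q10 + 1/4 * q11 + (1/2) * s1 := by rw [hdq10, hdq11, hds1]
  have hySr10 : avg (k + 1) (2 * l₂ + 1) 0 (fun y => (avg k l₁ (2 * n) fun x => F₃ x y) ^ 2) = 1/4 * r10 + 1/4 * r11 + (1/2) * t1 := by
    calc avg (k + 1) (2 * l₂ + 1) 0 (fun y => (avg k l₁ (2 * n) fun x => F₃ x y) ^ 2)
        = avg (k + 1) (2 * l₂ + 1) 0 (fun y => 1/4 * ((avg (k + 1) (2 * l₁) n fun x => F₃ x y) ^ 2) + 1/4 * ((avg (k + 1) (2 * l₁ + 1) n fun x => F₃ x y) ^ 2) + (1/2) * ((avg (k + 1) (2 * l₁) n fun x => F₃ x y) * (avg (k + 1) (2 * l₁ + 1) n fun x => F₃ x y))) := avg_congr _ _ _ (fun y => by rw [hx30 y]; ring)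
      _ = 1/4 * avg (k + 1) (2 * l₂ + 1) 0 (fun y => (avg (k + 1) (2 * l₁) n fun x => F₃ x y) ^ 2) + 1/4 * avg (k + 1) (2 * l₂ + 1) 0 (fun y => (avg (k + 1) (2 * l₁ + 1) n fun x => F₃ x y) ^ 2) + (1/2) * avg (k + 1) (2 * l₂ + 1) 0 (fun y => (avg (k + 1) (2 * l₁) n fun x => F₃ x y) * (avg (k + 1) (2 * l₁ + 1) n fun x => F₃ x y)) := avg_lin3 _ _ _ _ _ _ _ _ _ (bm_g0.sq) (bm_g1.sq) (bm_g0.mul bm_g1)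
      _ = 1/4 * r10 + 1/4 * r11 + (1/2) * t1 := by rw [hdr10, hdr11, hdt1]
  have hySq11 : avg (k + 1) (2 * l₂ + 1) 0 (fun y => (avg k l₁ (2 * n + 1) fun x => F₂ x y) ^ 2) = 1/4 * q10 + 1/4 * q11 + (-(1/2)) * s1 := by
    calc avg (k + 1) (2 * l₂ + 1) 0 (fun y => (avg k l₁ (2 * n + 1) fun x => F₂ x y) ^ 2)
        = avg (k + 1) (2 * l₂ + 1) 0 (fun y => 1/4 * ((avg (k + 1) (2 * l₁) n fun x => F₂ x y) ^ 2) + 1/4 * ((avg (k + 1) (2 * l₁ + 1) n fun x => F₂ x y) ^ 2) + (-(1/2)) * ((avg (k + 1) (2 * l₁) n fun x => F₂ x y) * (avg (k + 1) (2 * l₁ + 1) n fun x => F₂ x y))) := avg_congr _ _ _ (fun y => by rw [hx21 y]; ring)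
      _ = 1/4 * avg (k + 1) (2 * l₂ + 1) 0 (fun y => (avg (k + 1) (2 * l₁) n fun x => F₂ x y) ^ 2) + 1/4 * avg (k + 1) (2 * l₂ + 1) 0 (fun y => (avg (k + 1) (2 * l₁ + 1) n fun x => F₂ x y) ^ 2) + (-(1/2)) * avg (k + 1) (2 * l₂ + 1) 0 (fun y => (avg (k + 1) (2 * l₁) n fun x => F₂ x y) * (avg (k + 1) (2 * l₁ + 1) n fun x => F₂ x y)) := avg_lin3 _ _ _ _ _ _ _ _ _ (bm_f0.sq) (bm_f1.sq) (bm_f0.mul bm_f1)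
      _ = 1/4 * q10 + 1/4 * q11 + (-(1/2)) * s1 := by rw [hdq10, hdq11, hds1]
  have hySr11 : avg (k + 1) (2 * l₂ + 1) 0 (fun y => (avg k l₁ (2 * n + 1) fun x => F₃ x y) ^ 2) = 1/4 * r10 + 1/4 * r11 + (-(1/2)) * t1 := by
    calc avg (k + 1) (2 * l₂ + 1) 0 (fun y => (avg k l₁ (2 * n + 1) fun x => F₃ x y) ^ 2)
        = avg (k + 1) (2 * l₂ + 1) 0 (fun y => 1/4 * ((avg (k + 1) (2 * l₁) n fun x => F₃ x y) ^ 2) + 1/4 * ((avg (k + 1) (2 * l₁ + 1) n fun x => F₃ x y) ^ 2) + (-(1/2)) * ((avg (k + 1) (2 * l₁) n fun x => F₃ x y) * (avg (k + 1) (2 * l₁ + 1) n fun x => F₃ x y))) := avg_congr _ _ _ (fun y => by rw [hx31 y]; ring)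
      _ = 1/4 * avg (k + 1) (2 * l₂ + 1) 0 (fun y => (avg (k + 1) (2 * l₁) n fun x => F₃ x y) ^ 2) + 1/4 * avg (k + 1) (2 * l₂ + 1) 0 (fun y => (avg (k + 1) (2 * l₁ + 1) n fun x => F₃ x y) ^ 2) + (-(1/2)) * avg (k + 1) (2 * l₂ + 1) 0 (fun y => (avg (k + 1) (2 * l₁) n fun x => F₃ x y) * (avg (k + 1) (2 * l₁ + 1) n fun x => F₃ x y)) := avg_lin3 _ _ _ _ _ _ _ _ _ (bm_g0.sq) (bm_g1.sq) (bm_g0.mul bm_g1)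
      _ = 1/4 * r10 + 1/4 * r11 + (-(1/2)) * t1 := by rw [hdr10, hdr11, hdt1]
  have he_qp0 : avg (k + 1) (2 * l₂) 0 (fun y => ((avg (k + 1) (2 * l₁) n fun x => F₂ x y) + (avg (k + 1) (2 * l₁ + 1) n fun x => F₂ x y)) ^ 2) = q00 + q01 + 2 * s0 := by
    calc avg (k + 1) (2 * l₂) 0 (fun y => ((avg (k + 1) (2 * l₁) n fun x => F₂ x y) + (avg (k + 1) (2 * l₁ + 1) n fun x => F₂ x y)) ^ 2)
        = avg (k + 1) (2 * l₂) 0 (fun y => 1 * ((avg (k + 1) (2 * l₁) n fun x => F₂ x y) ^ 2) + 1 * ((avg (k + 1) (2 * l₁ + 1) n fun x => F₂ x y) ^ 2) + 2 * ((avg (k + 1) (2 * l₁) n fun x => F₂ x y) * (avg (k + 1) (2 * l₁ + 1) n fun x => F₂ x y))) := avg_congr _ _ _ (fun y => by ring)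
      _ = 1 * avg (k + 1) (2 * l₂) 0 (fun y => (avg (k + 1) (2 * l₁) n fun x => F₂ x y) ^ 2) + 1 * avg (k + 1) (2 * l₂) 0 (fun y => (avg (k + 1) (2 * l₁ + 1) n fun x => F₂ x y) ^ 2) + 2 * avg (k + 1) (2 * l₂) 0 (fun y => (avg (k + 1) (2 * l₁) n fun x => F₂ x y) * (avg (k + 1) (2 * l₁ + 1) n fun x => F₂ x y)) := avg_lin3 _ _ _ _ _ _ _ _ _ (bm_f0.sq) (bm_f1.sq) (bm_f0.mul bm_f1)
      _ = q00 + q01 + 2 * s0 := by rw [hdq00, hdq01, hds0]; ring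
  have he_rp0 : avg (k + 1) (2 * l₂) 0 (fun y => ((avg (k + 1) (2 * l₁) n fun x => F₃ x y) + (avg (k + 1) (2 * l₁ + 1) n fun x => F₃ x y)) ^ 2) = r00 + r01 + 2 * t0 := by
    calc avg (k + 1) (2 * l₂) 0 (fun y => ((avg (k + 1) (2 * l₁) n fun x => F₃ x y) + (avg (k + 1) (2 * l₁ + 1) n fun x => F₃ x y)) ^ 2)
        = avg (k + 1) (2 * l₂) 0 (fun y => 1 * ((avg (k + 1) (2 * l₁) n fun x => F₃ x y) ^ 2) + 1 * ((avg (k + 1) (2 * l₁ + 1) n fun x => F₃ x y) ^ 2) + 2 * ((avg (k + 1) (2 * l₁) n fun x => F₃ x y) * (avg (k + 1) (2 * l₁ + 1) n fun x => F₃ x y))) := avg_congr _ _ _ (fun y => by ring)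
      _ = 1 * avg (k + 1) (2 * l₂) 0 (fun y => (avg (k + 1) (2 * l₁) n fun x => F₃ x y) ^ 2) + 1 * avg (k + 1) (2 * l₂) 0 (fun y => (avg (k + 1) (2 * l₁ + 1) n fun x => F₃ x y) ^ 2) + 2 * avg (k + 1) (2 * l₂) 0 (fun y => (avg (k + 1) (2 * l₁) n fun x => F₃ x y) * (avg (k + 1) (2 * l₁ + 1) n fun x => F₃ x y)) := avg_lin3 _ _ _ _ _ _ _ _ _ (bm_g0.sq) (bm_g1.sq) (bm_g0.mul bm_g1)
      _ = r00 + r01 + 2 * t0 := by rw [hdr00, hdr01, hdt0]; ring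
  have he_qm0 : avg (k + 1) (2 * l₂) 0 (fun y => ((avg (k + 1) (2 * l₁) n fun x => F₂ x y) - (avg (k + 1) (2 * l₁ + 1) n fun x => F₂ x y)) ^ 2) = q00 + q01 - 2 * s0 := by
    calc avg (k + 1) (2 * l₂) 0 (fun y => ((avg (k + 1) (2 * l₁) n fun x => F₂ x y) - (avg (k + 1) (2 * l₁ + 1) n fun x => F₂ x y)) ^ 2)
        = avg (k + 1) (2 * l₂) 0 (fun y => 1 * ((avg (k + 1) (2 * l₁) n fun x => F₂ x y) ^ 2) + 1 * ((avg (k + 1) (2 * l₁ + 1) n fun x => F₂ x y) ^ 2) + (-2) * ((avg (k + 1) (2 * l₁) n fun x => F₂ x y) * (avg (k + 1) (2 * l₁ + 1) n fun x => F₂ x y))) := avg_congr _ _ _ (fun y => by ring)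
      _ = 1 * avg (k + 1) (2 * l₂) 0 (fun y => (avg (k + 1) (2 * l₁) n fun x => F₂ x y) ^ 2) + 1 * avg (k + 1) (2 * l₂) 0 (fun y => (avg (k + 1) (2 * l₁ + 1) n fun x => F₂ x y) ^ 2) + (-2) * avg (k + 1) (2 * l₂) 0 (fun y => (avg (k + 1) (2 * l₁) n fun x => F₂ x y) * (avg (k + 1) (2 * l₁ + 1) n fun x => F₂ x y)) := avg_lin3 _ _ _ _ _ _ _ _ _ (bm_f0.sq) (bm_f1.sq) (bm_f0.mul bm_f1)
      _ = q00 + q01 - 2 * s0 := by rw [hdq00, hdq01, hds0]; ring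
  have he_rm0 : avg (k + 1) (2 * l₂) 0 (fun y => ((avg (k + 1) (2 * l₁) n fun x => F₃ x y) - (avg (k + 1) (2 * l₁ + 1) n fun x => F₃ x y)) ^ 2) = r00 + r01 - 2 * t0 := by
    calc avg (k + 1) (2 * l₂) 0 (fun y => ((avg (k + 1) (2 * l₁) n fun x => F₃ x y) - (avg (k + 1) (2 * l₁ + 1) n fun x => F₃ x y)) ^ 2)
        = avg (k + 1) (2 * l₂) 0 (fun y => 1 * ((avg (k + 1) (2 * l₁) n fun x => F₃ x y) ^ 2) + 1 * ((avg (k + 1) (2 * l₁ + 1) n fun x => F₃ x y) ^ 2) + (-2) * ((avg (k + 1) (2 * l₁) n fun x => F₃ x y) * (avg (k + 1) (2 * l₁ + 1) n fun x => F₃ x y))) := avg_congr _ _ _ (fun y => by ring)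
      _ = 1 * avg (k + 1) (2 * l₂) 0 (fun y => (avg (k + 1) (2 * l₁) n fun x => F₃ x y) ^ 2) + 1 * avg (k + 1) (2 * l₂) 0 (fun y => (avg (k + 1) (2 * l₁ + 1) n fun x => F₃ x y) ^ 2) + (-2) * avg (k + 1) (2 * l₂) 0 (fun y => (avg (k + 1) (2 * l₁) n fun x => F₃ x y) * (avg (k + 1) (2 * l₁ + 1) n fun x => F₃ x y)) := avg_lin3 _ _ _ _ _ _ _ _ _ (bm_g0.sq) (bm_g1.sq) (bm_g0.mul bm_g1)
      _ = r00 + r01 - 2 * t0 := by rw [hdr00, hdr01, hdt0]; ring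
  have he_Pp0 : avg (k + 1) (2 * l₂) n (fun y => ((avg (k + 1) (2 * l₁) n fun x => F₂ x y) + (avg (k + 1) (2 * l₁ + 1) n fun x => F₂ x y)) * ((avg (k + 1) (2 * l₁) n fun x => F₃ x y) + (avg (k + 1) (2 * l₁ + 1) n fun x => F₃ x y))) = p00 + p01 + x0 := by
    calc avg (k + 1) (2 * l₂) n (fun y => ((avg (k + 1) (2 * l₁) n fun x => F₂ x y) + (avg (k + 1) (2 * l₁ + 1) n fun x => F₂ x y)) * ((avg (k + 1) (2 * l₁) n fun x => F₃ x y) + (avg (k + 1) (2 * l₁ + 1) n fun x => F₃ x y)))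
        = avg (k + 1) (2 * l₂) n (fun y => 1 * ((avg (k + 1) (2 * l₁) n fun x => F₂ x y) * (avg (k + 1) (2 * l₁) n fun x => F₃ x y)) + 1 * ((avg (k + 1) (2 * l₁ + 1) n fun x => F₂ x y) * (avg (k + 1) (2 * l₁ + 1) n fun x => F₃ x y)) + 1 * ((avg (k + 1) (2 * l₁) n fun x => F₂ x y) * (avg (k + 1) (2 * l₁ + 1) n fun x => F₃ x y) + (avg (k + 1) (2 * l₁ + 1) n fun x => F₂ x y) * (avg (k + 1) (2 * l₁) n fun x => F₃ x y))) := avg_congr _ _ _ (fun y => by ring)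
      _ = 1 * avg (k + 1) (2 * l₂) n (fun y => (avg (k + 1) (2 * l₁) n fun x => F₂ x y) * (avg (k + 1) (2 * l₁) n fun x => F₃ x y)) + 1 * avg (k + 1) (2 * l₂) n (fun y => (avg (k + 1) (2 * l₁ + 1) n fun x => F₂ x y) * (avg (k + 1) (2 * l₁ + 1) n fun x => F₃ x y)) + 1 * avg (k + 1) (2 * l₂) n (fun y => (avg (k + 1) (2 * l₁) n fun x => F₂ x y) * (avg (k + 1) (2 * l₁ + 1) n fun x => F₃ x y) + (avg (k + 1) (2 * l₁ + 1) n fun x => F₂ x y) * (avg (k + 1) (2 * l₁) n fun x => F₃ x y)) := avg_lin3 _ _ _ _ _ _ _ _ _ (bm_f0.mul bm_g0) (bm_f1.mul bm_g1) ((bm_f0.mul bm_g1).add (bm_f1.mul bm_g0))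
      _ = p00 + p01 + x0 := by rw [hdp00, hdp01, hdx0]; ring
  have he_Pm0 : avg (k + 1) (2 * l₂) n (fun y => ((avg (k + 1) (2 * l₁) n fun x => F₂ x y) - (avg (k + 1) (2 * l₁ + 1) n fun x => F₂ x y)) * ((avg (k + 1) (2 * l₁) n fun x => F₃ x y) - (avg (k + 1) (2 * l₁ + 1) n fun x => F₃ x y))) = p00 + p01 - x0 := by
    calc avg (k + 1) (2 * l₂) n (fun y => ((avg (k + 1) (2 * l₁) n fun x => F₂ x y) - (avg (k + 1) (2 * l₁ + 1) n fun x => F₂ x y)) * ((avg (k + 1) (2 * l₁) n fun x => F₃ x y) - (avg (k + 1) (2 * l₁ + 1) n fun x => F₃ x y)))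
        = avg (k + 1) (2 * l₂) n (fun y => 1 * ((avg (k + 1) (2 * l₁) n fun x => F₂ x y) * (avg (k + 1) (2 * l₁) n fun x => F₃ x y)) + 1 * ((avg (k + 1) (2 * l₁ + 1) n fun x => F₂ x y) * (avg (k + 1) (2 * l₁ + 1) n fun x => F₃ x y)) + (-1) * ((avg (k + 1) (2 * l₁) n fun x => F₂ x y) * (avg (k + 1) (2 * l₁ + 1) n fun x => F₃ x y) + (avg (k + 1) (2 * l₁ + 1) n fun x => F₂ x y) * (avg (k + 1) (2 * l₁) n fun x => F₃ x y))) := avg_congr _ _ _ (fun y => by ring)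
      _ = 1 * avg (k + 1) (2 * l₂) n (fun y => (avg (k + 1) (2 * l₁) n fun x => F₂ x y) * (avg (k + 1) (2 * l₁) n fun x => F₃ x y)) + 1 * avg (k + 1) (2 * l₂) n (fun y => (avg (k + 1) (2 * l₁ + 1) n fun x => F₂ x y) * (avg (k + 1) (2 * l₁ + 1) n fun x => F₃ x y)) + (-1) * avg (k + 1) (2 * l₂) n (fun y => (avg (k + 1) (2 * l₁) n fun x => F₂ x y) * (avg (k + 1) (2 * l₁ + 1) n fun x => F₃ x y) + (avg (k + 1) (2 * l₁ + 1) n fun x => F₂ x y) * (avg (k + 1) (2 * l₁) n fun x => F₃ x y)) := avg_lin3 _ _ _ _ _ _ _ _ _ (bm_f0.mul bm_g0) (bm_f1.mul bm_g1) ((bm_f0.mul bm_g1).add (bm_f1.mul bm_g0))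
      _ = p00 + p01 - x0 := by rw [hdp00, hdp01, hdx0]; ring
  have he_qp1 : avg (k + 1) (2 * l₂ + 1) 0 (fun y => ((avg (k + 1) (2 * l₁) n fun x => F₂ x y) + (avg (k + 1) (2 * l₁ + 1) n fun x => F₂ x y)) ^ 2) = q10 + q11 + 2 * s1 := by
    calc avg (k + 1) (2 * l₂ + 1) 0 (fun y => ((avg (k + 1) (2 * l₁) n fun x => F₂ x y) + (avg (k + 1) (2 * l₁ + 1) n fun x => F₂ x y)) ^ 2)
        = avg (k + 1) (2 * l₂ + 1) 0 (fun y => 1 * ((avg (k + 1) (2 * l₁) n fun x => F₂ x y) ^ 2) + 1 * ((avg (k + 1) (2 * l₁ + 1) n fun x => F₂ x y) ^ 2) + 2 * ((avg (k + 1) (2 * l₁) n fun x => F₂ x y) * (avg (k + 1) (2 * l₁ + 1) n fun x => F₂ x y))) := avg_congr _ _ _ (fun y => by ring)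
      _ = 1 * avg (k + 1) (2 * l₂ + 1) 0 (fun y => (avg (k + 1) (2 * l₁) n fun x => F₂ x y) ^ 2) + 1 * avg (k + 1) (2 * l₂ + 1) 0 (fun y => (avg (k + 1) (2 * l₁ + 1) n fun x => F₂ x y) ^ 2) + 2 * avg (k + 1) (2 * l₂ + 1) 0 (fun y => (avg (k + 1) (2 * l₁) n fun x => F₂ x y) * (avg (k + 1) (2 * l₁ + 1) n fun x => F₂ x y)) := avg_lin3 _ _ _ _ _ _ _ _ _ (bm_f0.sq) (bm_f1.sq) (bm_f0.mul bm_f1)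
      _ = q10 + q11 + 2 * s1 := by rw [hdq10, hdq11, hds1]; ring
  have he_rp1 : avg (k + 1) (2 * l₂ + 1) 0 (fun y => ((avg (k + 1) (2 * l₁) n fun x => F₃ x y) + (avg (k + 1) (2 * l₁ + 1) n fun x => F₃ x y)) ^ 2) = r10 + r11 + 2 * t1 := by
    calc avg (k + 1) (2 * l₂ + 1) 0 (fun y => ((avg (k + 1) (2 * l₁) n fun x => F₃ x y) + (avg (k + 1) (2 * l₁ + 1) n fun x => F₃ x y)) ^ 2)
        = avg (k + 1) (2 * l₂ + 1) 0 (fun y => 1 * ((avg (k + 1) (2 * l₁) n fun x => F₃ x y) ^ 2) + 1 * ((avg (k + 1) (2 * l₁ + 1) n fun x => F₃ x y) ^ 2) + 2 * ((avg (k + 1) (2 * l₁) n fun x => F₃ x y) * (avg (k + 1) (2 * l₁ + 1) n fun x => F₃ x y))) := avg_congr _ _ _ (fun y => by ring)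
      _ = 1 * avg (k + 1) (2 * l₂ + 1) 0 (fun y => (avg (k + 1) (2 * l₁) n fun x => F₃ x y) ^ 2) + 1 * avg (k + 1) (2 * l₂ + 1) 0 (fun y => (avg (k + 1) (2 * l₁ + 1) n fun x => F₃ x y) ^ 2) + 2 * avg (k + 1) (2 * l₂ + 1) 0 (fun y => (avg (k + 1) (2 * l₁) n fun x => F₃ x y) * (avg (k + 1) (2 * l₁ + 1) n fun x => F₃ x y)) := avg_lin3 _ _ _ _ _ _ _ _ _ (bm_g0.sq) (bm_g1.sq) (bm_g0.mul bm_g1)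
      _ = r10 + r11 + 2 * t1 := by rw [hdr10, hdr11, hdt1]; ring
  have he_qm1 : avg (k + 1) (2 * l₂ + 1) 0 (fun y => ((avg (k + 1) (2 * l₁) n fun x => F₂ x y) - (avg (k + 1) (2 * l₁ + 1) n fun x => F₂ x y)) ^ 2) = q10 + q11 - 2 * s1 := by
    calc avg (k + 1) (2 * l₂ + 1) 0 (fun y => ((avg (k + 1) (2 * l₁) n fun x => F₂ x y) - (avg (k + 1) (2 * l₁ + 1) n fun x => F₂ x y)) ^ 2)
        = avg (k + 1) (2 * l₂ + 1) 0 (fun y => 1 * ((avg (k + 1) (2 * l₁) n fun x => F₂ x y) ^ 2) + 1 * ((avg (k + 1) (2 * l₁ + 1) n fun x => F₂ x y) ^ 2) + (-2) * ((avg (k + 1) (2 * l₁) n fun x => F₂ x y) * (avg (k + 1) (2 * l₁ + 1) n fun x => F₂ x y))) := avg_congr _ _ _ (fun y => by ring)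
      _ = 1 * avg (k + 1) (2 * l₂ + 1) 0 (fun y => (avg (k + 1) (2 * l₁) n fun x => F₂ x y) ^ 2) + 1 * avg (k + 1) (2 * l₂ + 1) 0 (fun y => (avg (k + 1) (2 * l₁ + 1) n fun x => F₂ x y) ^ 2) + (-2) * avg (k + 1) (2 * l₂ + 1) 0 (fun y => (avg (k + 1) (2 * l₁) n fun x => F₂ x y) * (avg (k + 1) (2 * l₁ + 1) n fun x => F₂ x y)) := avg_lin3 _ _ _ _ _ _ _ _ _ (bm_f0.sq) (bm_f1.sq) (bm_f0.mul bm_f1)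
      _ = q10 + q11 - 2 * s1 := by rw [hdq10, hdq11, hds1]; ring
  have he_rm1 : avg (k + 1) (2 * l₂ + 1) 0 (fun y => ((avg (k + 1) (2 * l₁) n fun x => F₃ x y) - (avg (k + 1) (2 * l₁ + 1) n fun x => F₃ x y)) ^ 2) = r10 + r11 - 2 * t1 := by
    calc avg (k + 1) (2 * l₂ + 1) 0 (fun y => ((avg (k + 1) (2 * l₁) n fun x => F₃ x y) - (avg (k + 1) (2 * l₁ + 1) n fun x => F₃ x y)) ^ 2)
        = avg (k + 1) (2 * l₂ + 1) 0 (fun y => 1 * ((avg (k + 1) (2 * l₁) n fun x => F₃ x y) ^ 2) + 1 * ((avg (k + 1) (2 * l₁ + 1) n fun x => F₃ x y) ^ 2) + (-2) * ((avg (k + 1) (2 * l₁) n fun x => F₃ x y) * (avg (k + 1) (2 * l₁ + 1) n fun x => F₃ x y))) := avg_congr _ _ _ (fun y => by ring)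
      _ = 1 * avg (k + 1) (2 * l₂ + 1) 0 (fun y => (avg (k + 1) (2 * l₁) n fun x => F₃ x y) ^ 2) + 1 * avg (k + 1) (2 * l₂ + 1) 0 (fun y => (avg (k + 1) (2 * l₁ + 1) n fun x => F₃ x y) ^ 2) + (-2) * avg (k + 1) (2 * l₂ + 1) 0 (fun y => (avg (k + 1) (2 * l₁) n fun x => F₃ x y) * (avg (k + 1) (2 * l₁ + 1) n fun x => F₃ x y)) := avg_lin3 _ _ _ _ _ _ _ _ _ (bm_g0.sq) (bm_g1.sq) (bm_g0.mul bm_g1)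
      _ = r10 + r11 - 2 * t1 := by rw [hdr10, hdr11, hdt1]; ring
  have he_Pp1 : avg (k + 1) (2 * l₂ + 1) n (fun y => ((avg (k + 1) (2 * l₁) n fun x => F₂ x y) + (avg (k + 1) (2 * l₁ + 1) n fun x => F₂ x y)) * ((avg (k + 1) (2 * l₁) n fun x => F₃ x y) + (avg (k + 1) (2 * l₁ + 1) n fun x => F₃ x y))) = p10 + p11 + x1 := by
    calc avg (k + 1) (2 * l₂ + 1) n (fun y => ((avg (k + 1) (2 * l₁) n fun x => F₂ x y) + (avg (k + 1) (2 * l₁ + 1) n fun x => F₂ x y)) * ((avg (k + 1) (2 * l₁) n fun x => F₃ x y) + (avg (k + 1) (2 * l₁ + 1) n fun x => F₃ x y)))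
        = avg (k + 1) (2 * l₂ + 1) n (fun y => 1 * ((avg (k + 1) (2 * l₁) n fun x => F₂ x y) * (avg (k + 1) (2 * l₁) n fun x => F₃ x y)) + 1 * ((avg (k + 1) (2 * l₁ + 1) n fun x => F₂ x y) * (avg (k + 1) (2 * l₁ + 1) n fun x => F₃ x y)) + 1 * ((avg (k + 1) (2 * l₁) n fun x => F₂ x y) * (avg (k + 1) (2 * l₁ + 1) n fun x => F₃ x y) + (avg (k + 1) (2 * l₁ + 1) n fun x => F₂ x y) * (avg (k + 1) (2 * l₁) n fun x => F₃ x y))) := avg_congr _ _ _ (fun y => by ring)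
      _ = 1 * avg (k + 1) (2 * l₂ + 1) n (fun y => (avg (k + 1) (2 * l₁) n fun x => F₂ x y) * (avg (k + 1) (2 * l₁) n fun x => F₃ x y)) + 1 * avg (k + 1) (2 * l₂ + 1) n (fun y => (avg (k + 1) (2 * l₁ + 1) n fun x => F₂ x y) * (avg (k + 1) (2 * l₁ + 1) n fun x => F₃ x y)) + 1 * avg (k + 1) (2 * l₂ + 1) n (fun y => (avg (k + 1) (2 * l₁) n fun x => F₂ x y) * (avg (k + 1) (2 * l₁ + 1) n fun x => F₃ x y) + (avg (k + 1) (2 * l₁ + 1) n fun x => F₂ x y) * (avg (k + 1) (2 * l₁) n fun x => F₃ x y)) := avg_lin3 _ _ _ _ _ _ _ _ _ (bm_f0.mul bm_g0) (bm_f1.mul bm_g1) ((bm_f0.mul bm_g1).add (bm_f1.mul bm_g0))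
      _ = p10 + p11 + x1 := by rw [hdp10, hdp11, hdx1]; ring
  have he_Pm1 : avg (k + 1) (2 * l₂ + 1) n (fun y => ((avg (k + 1) (2 * l₁) n fun x => F₂ x y) - (avg (k + 1) (2 * l₁ + 1) n fun x => F₂ x y)) * ((avg (k + 1) (2 * l₁) n fun x => F₃ x y) - (avg (k + 1) (2 * l₁ + 1) n fun x => F₃ x y))) = p10 + p11 - x1 := by
    calc avg (k + 1) (2 * l₂ + 1) n (fun y => ((avg (k + 1) (2 * l₁) n fun x => F₂ x y) - (avg (k + 1) (2 * l₁ + 1) n fun x => F₂ x y)) * ((avg (k + 1) (2 * l₁) n fun x => F₃ x y) - (avg (k + 1) (2 * l₁ + 1) n fun x => F₃ x y)))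
        = avg (k + 1) (2 * l₂ + 1) n (fun y => 1 * ((avg (k + 1) (2 * l₁) n fun x => F₂ x y) * (avg (k + 1) (2 * l₁) n fun x => F₃ x y)) + 1 * ((avg (k + 1) (2 * l₁ + 1) n fun x => F₂ x y) * (avg (k + 1) (2 * l₁ + 1) n fun x => F₃ x y)) + (-1) * ((avg (k + 1) (2 * l₁) n fun x => F₂ x y) * (avg (k + 1) (2 * l₁ + 1) n fun x => F₃ x y) + (avg (k + 1) (2 * l₁ + 1) n fun x => F₂ x y) * (avg (k + 1) (2 * l₁) n fun x => F₃ x y))) := avg_congr _ _ _ (fun y => by ring)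
      _ = 1 * avg (k + 1) (2 * l₂ + 1) n (fun y => (avg (k + 1) (2 * l₁) n fun x => F₂ x y) * (avg (k + 1) (2 * l₁) n fun x => F₃ x y)) + 1 * avg (k + 1) (2 * l₂ + 1) n (fun y => (avg (k + 1) (2 * l₁ + 1) n fun x => F₂ x y) * (avg (k + 1) (2 * l₁ + 1) n fun x => F₃ x y)) + (-1) * avg (k + 1) (2 * l₂ + 1) n (fun y => (avg (k + 1) (2 * l₁) n fun x => F₂ x y) * (avg (k + 1) (2 * l₁ + 1) n fun x => F₃ x y) + (avg (k + 1) (2 * l₁ + 1) n fun x => F₂ x y) * (avg (k + 1) (2 * l₁) n fun x => F₃ x y)) := avg_lin3 _ _ _ _ _ _ _ _ _ (bm_f0.mul bm_g0) (bm_f1.mul bm_g1) ((bm_f0.mul bm_g1).add (bm_f1.mul bm_g0))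
      _ = p10 + p11 - x1 := by rw [hdp10, hdp11, hdx1]; ring
  have hu0p : 0 ≤ q00 + q01 + 2 * s0 := by
    rw [← he_qp0]
    exact avg_zero_nonneg _ _ (fun y => sq_nonneg _)
  have hv0p : 0 ≤ r00 + r01 + 2 * t0 := by
    rw [← he_rp0]
    exact avg_zero_nonneg _ _ (fun y => sq_nonneg _)
  have hc0p : (p00 + p01 + x0) ^ 2 ≤ (q00 + q01 + 2 * s0) * (r00 + r01 + 2 * t0) := by
    rw [← he_Pp0, ← he_qp0, ← he_rp0]
    exact avg_cs (k + 1) (2 * l₂) n (fun y => (avg (k + 1) (2 * l₁) n fun x => F₂ x y) + (avg (k + 1) (2 * l₁ + 1) n fun x => F₂ x y)) (fun y => (avg (k + 1) (2 * l₁) n fun x => F₃ x y) + (avg (k + 1) (2 * l₁ + 1) n fun x => F₃ x y)) (BM.add bm_f0 bm_f1) (BM.add bm_g0 bm_g1)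
  have hu0m : 0 ≤ q00 + q01 - 2 * s0 := by
    rw [← he_qm0]
    exact avg_zero_nonneg _ _ (fun y => sq_nonneg _)
  have hv0m : 0 ≤ r00 + r01 - 2 * t0 := by
    rw [← he_rm0]
    exact avg_zero_nonneg _ _ (fun y => sq_nonneg _)
  have hc0m : (p00 + p01 - x0) ^ 2 ≤ (q00 + q01 - 2 * s0) * (r00 + r01 - 2 * t0) := by
    rw [← he_Pm0, ← he_qm0, ← he_rm0]
    exact avg_cs (k + 1) (2 * l₂) n (fun y => (avg (k + 1) (2 * l₁) n fun x => F₂ x y) - (avg (k + 1) (2 * l₁ + 1) n fun x => F₂ x y)) (fun y => (avg (k + 1) (2 * l₁) n fun x => F₃ x y) - (avg (k + 1) (2 * l₁ + 1) n fun x => F₃ x y)) (BM.sub bm_f0 bm_f1) (BM.sub bm_g0 bm_g1)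
  have hu1p : 0 ≤ q10 + q11 + 2 * s1 := by
    rw [← he_qp1]
    exact avg_zero_nonneg _ _ (fun y => sq_nonneg _)
  have hv1p : 0 ≤ r10 + r11 + 2 * t1 := by
    rw [← he_rp1]
    exact avg_zero_nonneg _ _ (fun y => sq_nonneg _)
  have hc1p : (p10 + p11 + x1) ^ 2 ≤ (q10 + q11 + 2 * s1) * (r10 + r11 + 2 * t1) := by
    rw [← he_Pp1, ← he_qp1, ← he_rp1]
    exact avg_cs (k + 1) (2 * l₂ + 1) n (fun y => (avg (k + 1) (2 * l₁) n fun x => F₂ x y) + (avg (k + 1) (2 * l₁ + 1) n fun x => F₂ x y)) (fun y => (avg (k + 1) (2 * l₁) n fun x => F₃ x y) + (avg (k + 1) (2 * l₁ + 1) n fun x => F₃ x y)) (BM.add bm_f0 bm_f1) (BM.add bm_g0 bm_g1)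
  have hu1m : 0 ≤ q10 + q11 - 2 * s1 := by
    rw [← he_qm1]
    exact avg_zero_nonneg _ _ (fun y => sq_nonneg _)
  have hv1m : 0 ≤ r10 + r11 - 2 * t1 := by
    rw [← he_rm1]
    exact avg_zero_nonneg _ _ (fun y => sq_nonneg _)
  have hc1m : (p10 + p11 - x1) ^ 2 ≤ (q10 + q11 - 2 * s1) * (r10 + r11 - 2 * t1) := by
    rw [← he_Pm1, ← he_qm1, ← he_rm1]
    exact avg_cs (k + 1) (2 * l₂ + 1) n (fun y => (avg (k + 1) (2 * l₁) n fun x => F₂ x y) - (avg (k + 1) (2 * l₁ + 1) n fun x => F₂ x y)) (fun y => (avg (k + 1) (2 * l₁) n fun x => F₃ x y) - (avg (k + 1) (2 * l₁ + 1) n fun x => F₃ x y)) (BM.sub bm_f0 bm_f1) (BM.sub bm_g0 bm_g1)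
  have hGA0 : avg k l₂ (2 * n) (fun y => avg k l₁ 0 fun x => F₁ x y) = 1/2 * (1/2 * a00 + 1/2 * a01) + 1/2 * (1/2 * a10 + 1/2 * a11) := by
    rw [avg_split0 n (fun y => avg k l₁ 0 fun x => F₁ x y) bm_PE, hyA0, hyA1]
  have hGA1 : avg k l₂ (2 * n + 1) (fun y => avg k l₁ 0 fun x => F₁ x y) = 1/2 * (1/2 * a00 + 1/2 * a01) - 1/2 * (1/2 * a10 + 1/2 * a11) := by
    rw [avg_split1 n (fun y => avg k l₁ 0 fun x => F₁ x y) bm_PE, hyA0, hyA1]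
  have hGH00 : avg k l₂ (2 * n) (fun y => (avg k l₁ (2 * n) fun x => F₂ x y) * (avg k l₁ (2 * n) fun x => F₃ x y)) = 1/2 * (1/4 * p00 + 1/4 * p01 + (1/4) * x0) + 1/2 * (1/4 * p10 + 1/4 * p11 + (1/4) * x1) := by
    rw [avg_split0 n (fun y => (avg k l₁ (2 * n) fun x => F₂ x y) * (avg k l₁ (2 * n) fun x => F₃ x y)) bm_prod0, hyP00, hyP10]
  have hGH01 : avg k l₂ (2 * n) (fun y => (avg k l₁ (2 * n + 1) fun x => F₂ x y) * (avg k l₁ (2 * n + 1) fun x => F₃ x y)) = 1/2 * (1/4 * p00 + 1/4 * p01 + (-(1/4)) * x0) + 1/2 * (1/4 * p10 + 1/4 * p11 + (-(1/4)) * x1) := by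
    rw [avg_split0 n (fun y => (avg k l₁ (2 * n + 1) fun x => F₂ x y) * (avg k l₁ (2 * n + 1) fun x => F₃ x y)) bm_prod1, hyP01, hyP11]
  have hGH10 : avg k l₂ (2 * n + 1) (fun y => (avg k l₁ (2 * n) fun x => F₂ x y) * (avg k l₁ (2 * n) fun x => F₃ x y)) = 1/2 * (1/4 * p00 + 1/4 * p01 + (1/4) * x0) - 1/2 * (1/4 * p10 + 1/4 * p11 + (1/4) * x1) := by
    rw [avg_split1 n (fun y => (avg k l₁ (2 * n) fun x => F₂ x y) * (avg k l₁ (2 * n) fun x => F₃ x y)) bm_prod0, hyP00, hyP10]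
  have hGH11 : avg k l₂ (2 * n + 1) (fun y => (avg k l₁ (2 * n + 1) fun x => F₂ x y) * (avg k l₁ (2 * n + 1) fun x => F₃ x y)) = 1/2 * (1/4 * p00 + 1/4 * p01 + (-(1/4)) * x0) - 1/2 * (1/4 * p10 + 1/4 * p11 + (-(1/4)) * x1) := by
    rw [avg_split1 n (fun y => (avg k l₁ (2 * n + 1) fun x => F₂ x y) * (avg k l₁ (2 * n + 1) fun x => F₃ x y)) bm_prod1, hyP01, hyP11]
  have hSQf0 : avg k l₂ 0 (fun y => (avg k l₁ (2 * n) fun x => F₂ x y) ^ 2) = 1/2 * (1/4 * q00 + 1/4 * q01 + (1/2) * s0) + 1/2 * (1/4 * q10 + 1/4 * q11 + (1/2) * s1) := by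
    rw [avg_split00 (fun y => (avg k l₁ (2 * n) fun x => F₂ x y) ^ 2) bm_sqf0, hySq00, hySq10]
  have hSQg0 : avg k l₂ 0 (fun y => (avg k l₁ (2 * n) fun x => F₃ x y) ^ 2) = 1/2 * (1/4 * r00 + 1/4 * r01 + (1/2) * t0) + 1/2 * (1/4 * r10 + 1/4 * r11 + (1/2) * t1) := by
    rw [avg_split00 (fun y => (avg k l₁ (2 * n) fun x => F₃ x y) ^ 2) bm_sqg0, hySr00, hySr10]
  have hSQf1 : avg k l₂ 0 (fun y => (avg k l₁ (2 * n + 1) fun x => F₂ x y) ^ 2) = 1/2 * (1/4 * q00 + 1/4 * q01 + (-(1/2)) * s0) + 1/2 * (1/4 * q10 + 1/4 * q11 + (-(1/2)) * s1) := by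
    rw [avg_split00 (fun y => (avg k l₁ (2 * n + 1) fun x => F₂ x y) ^ 2) bm_sqf1, hySq01, hySq11]
  have hSQg1 : avg k l₂ 0 (fun y => (avg k l₁ (2 * n + 1) fun x => F₃ x y) ^ 2) = 1/2 * (1/4 * r00 + 1/4 * r01 + (-(1/2)) * t0) + 1/2 * (1/4 * r10 + 1/4 * r11 + (-(1/2)) * t1) := by
    rw [avg_split00 (fun y => (avg k l₁ (2 * n + 1) fun x => F₃ x y) ^ 2) bm_sqg1, hySr01, hySr11]
  have hAeq : Aform F₁ F₂ F₃ k l₁ l₂ n = ((1/2*(1/2*(a00+a01) + 1/2*(a10+a11)))*(1/2*((1/4*(p00+p01-x0)) + (1/4*(p10+p11-x1)))) + (1/2*(1/2*(a00+a01) - 1/2*(a10+a11)))*(1/2*((1/4*(p00+p01+x0)) - (1/4*(p10+p11+x1))))) := by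
    simp only [Aform, Finset.sum_range_succ, Finset.sum_range_zero, zero_add, add_zero, Nat.sub_zero, Nat.sub_self]
    rw [hGA0, hGA1, hGH01, hGH10]
    ring
  have hBmeq : boxB (Bminus F₁ F₂ F₃) k l₁ l₂ n = ((1/4*(a00*p00+a01*p01+a10*p10+a11*p11) - ((1/2*(1/2*(a00+a01) + 1/2*(a10+a11)))*(1/2*((1/4*(p00+p01+x0)) + (1/4*(p10+p11+x1)))) + (1/2*(1/2*(a00+a01) - 1/2*(a10+a11)))*(1/2*((1/4*(p00+p01-x0)) - (1/4*(p10+p11-x1)))))) - (1/4*(a00^2+a01^2+a10^2+a11^2) - ((1/2*(1/2*(a00+a01) + 1/2*(a10+a11)))^2 + (1/2*(1/2*(a00+a01) - 1/2*(a10+a11)))^2)) - 1/2*(1/4*(p00^2+p01^2+p10^2+p11^2) - ((1/2*((1/4*(p00+p01+x0)) + (1/4*(p10+p11+x1))))^2 + (1/2*((1/4*(p00+p01-x0)) - (1/4*(p10+p11-x1))))^2)) - 1/2*(1/4*(q00^2+q01^2+q10^2+q11^2) - ((1/2*((1/4*(q00+q01+2*s0)) + (1/4*(q10+q11+2*s1))))^2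 + (1/2*((1/4*(q00+q01-2*s0)) + (1/4*(q10+q11-2*s1))))^2)) - 1/2*(1/4*(r00^2+r01^2+r10^2+r11^2) - ((1/2*((1/4*(r00+r01+2*t0)) + (1/4*(r10+r11+2*t1))))^2 + (1/2*((1/4*(r00+r01-2*t0)) + (1/4*(r10+r11-2*t1))))^2))) := by
    simp only [boxB, Bminus, B1, B2, B3, B4, B5, Finset.sum_range_succ, Finset.sum_range_zero, zero_add, add_zero]
    rw [← hda00, ← hdp00, ← hdq00, ← hdr00, ← hda01, ← hdp01, ← hdq01, ← hdr01, ← hda10, ← hdp10, ← hdq10, ← hdr10, ← hda11, ← hdp11, ← hdq11, ← hdr11]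
    rw [hGA0, hGA1, hGH00, hGH11, hSQf0, hSQf1, hSQg0, hSQg1]
    ring
  have hBpeq : boxB (Bplus F₁ F₂ F₃) k l₁ l₂ n = ((1/4*(a00*p00+a01*p01+a10*p10+a11*p11) - ((1/2*(1/2*(a00+a01) + 1/2*(a10+a11)))*(1/2*((1/4*(p00+p01+x0)) + (1/4*(p10+p11+x1)))) + (1/2*(1/2*(a00+a01) - 1/2*(a10+a11)))*(1/2*((1/4*(p00+p01-x0)) - (1/4*(p10+p11-x1)))))) + (1/4*(a00^2+a01^2+a10^2+a11^2) - ((1/2*(1/2*(a00+a01) + 1/2*(a10+a11)))^2 + (1/2*(1/2*(a00+a01) - 1/2*(a10+a11)))^2)) + 1/2*(1/4*(p00^2+p01^2+p10^2+p11^2) - ((1/2*((1/4*(p00+p01+x0)) + (1/4*(p10+p11+x1))))^2 + (1/2*((1/4*(p00+p01-x0)) - (1/4*(p10+p11-x1))))^2)) + 1/2*(1/4*(q00^2+q01^2+q10^2+q11^2) - ((1/2*((1/4*(q00+q01+2*s0)) + (1/4*(q10+q11+2*s1))))^2 + (1/2*((1/4*(q00+q01-2*s0)) + (1/4*(q10+q11-2*s1))))^2))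 + 1/2*(1/4*(r00^2+r01^2+r10^2+r11^2) - ((1/2*((1/4*(r00+r01+2*t0)) + (1/4*(r10+r11+2*t1))))^2 + (1/2*((1/4*(r00+r01-2*t0)) + (1/4*(r10+r11-2*t1))))^2))) := by
    simp only [boxB, Bplus, B1, B2, B3, B4, B5, Finset.sum_range_succ, Finset.sum_range_zero, zero_add, add_zero]
    rw [← hda00, ← hdp00, ← hdq00, ← hdr00, ← hda01, ← hdp01, ← hdq01, ← hdr01, ← hda10, ← hdp10, ← hdq10, ← hdr10, ← hda11, ← hdp11, ← hdq11, ← hdr11]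
    rw [hGA0, hGA1, hGH00, hGH11, hSQf0, hSQf1, hSQg0, hSQg1]
    ring
  rw [hBmeq, hAeq, hBpeq]
  exact key_alg a00 a01 a10 a11 p00 p01 p10 p11 x0 x1 q00 q01 q10 q11 r00 r01 r10 r11 s0 s1 t0 t1 hu0p hu0m hu1p hu1m hv0p hv0m hv1p hv1m hc0p hc0m hc1p hc1m
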